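/- arXiv:1402.4112 — 5 statements merged into one kernel-verified Lean document; each statement's English description precedes it below -/
import Mathlib

section
/- For every finite nonempty alphabet A, every finite coloring of the set W(A) of finite words over A admits an infinite sequence (t_n(x))_{n=0}^∞ of variable words over A such that for every n ∈ ℕ, every choice of indices m_0 < m_1 < ⋯ < m_n, and every choice of letters a_0, a_1, …, a_n ∈ A, the concatenated words t_{m_0}(a_0) t_{m_1}(a_1) ⋯ t_{m_n}(a_n) all receive the same color. -/
/- Words over an alphabet are `List α`.  The variable symbol `x` is modelled by
`none : Option α`, and variable words are lists over `Option α` containing `none`. -/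

namespace HJ

variable {α : Type*}

/-- Substitution of the letter `a` for every occurrence of the variable in a
variable word, producing a constant word. -/
def substC (s : List (Option α)) (a : α) : List α :=
  s.map (fun b => b.getD a)

/-- Substitution of `b ∈ A ∪ {x}` (a letter `some a` or the variable `none`)
for every occurrence of the variable. -/
def substV (s : List (Option α)) (b : Option α) : List (Option α) :=
  s.map (fun c => Option.elim c b some)

/-- `s` is a variable word over the alphabet `S`: all its letters lie in `S`
and it contains at least one occurrence of the variable. -/
def IsVarWord (S : Set α) (s : List (Option α)) : Prop :=
  (∀ a : α, some a ∈ s → a ∈ S) ∧ none ∈ s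

/-- `W(S)`: the set of (constant) words over the alphabet `S`. -/
def WordsOver (S : Set α) : Set (List α) :=
  { w | ∀ a ∈ w, a ∈ S }

/-- The constant span of the sequence `s` of variable words, with indices
restricted to `I` and the letter substituted at position `l i` taken from the
alphabet `B (l i)`: all concatenations `s_{l_0}(a_0) ⋯ s_{l_n}(a_n)` with
`l_0 < ⋯ < l_n` in `I` and `a_i ∈ B (l_i)`. -/
def constSpan (B : ℕ → Set α) (s : ℕ → List (Option α)) (I : Set ℕ) :
    Set (List α) :=
  { w | ∃ (n : ℕ) (l : Fin (n + 1) → ℕ) (a : Fin (n + 1) → α),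
      StrictMono l ∧ (∀ i, l i ∈ I) ∧ (∀ i, a i ∈ B (l i)) ∧
      w = (List.ofFn fun i => substC (s (l i)) (a i)).flatten }

/-- The variable span of the sequence `s` of variable words, with indices
restricted to `I` and alphabets given by `B`: all concatenations
`s_{l_0}(b_0) ⋯ s_{l_n}(b_n)` with `l_0 < ⋯ < l_n` in `I` and
`b_i ∈ B (l_i) ∪ {x}` which contain at least one occurrence of the variable. -/
def varSpan (B : ℕ → Set α) (s : ℕ → List (Option α)) (I : Set ℕ) :
    Set (List (Option α)) :=
  { w | ∃ (n : ℕ) (l : Fin (n + 1) → ℕ) (b : Fin (n + 1) → Option α),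
      StrictMono l ∧ (∀ i, l i ∈ I) ∧
      (∀ i, ∀ a : α, b i = some a → a ∈ B (l i)) ∧
      none ∈ w ∧
      w = (List.ofFn fun i => substV (s (l i)) (b i)).flatten }

/-- `(t_0, …, t_l)` is a finite extracted subsequence of `s` (with alphabets `B`):
there are `0 = m_0 < m_1 < ⋯` with `t_i` in the variable span of
`(s_n)_{n = m_i}^{m_{i+1} - 1}` (with alphabets `B`) for all `i ≤ l`. -/
def ExtractedFin (B : ℕ → Set α) (s t : ℕ → List (Option α)) (l : ℕ) : Prop :=
  ∃ m : ℕ → ℕ, m 0 = 0 ∧ StrictMono m ∧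
    ∀ i ≤ l, t i ∈ varSpan B s (Set.Ico (m i) (m (i + 1)))

/-- `t` is an infinite extracted subsequence of `s` (with alphabets `B`). -/
def Extracted (B : ℕ → Set α) (s t : ℕ → List (Option α)) : Prop :=
  ∀ l : ℕ, ExtractedFin B s t l

/-- `E` is large in `s` (with alphabets `B`): `E` meets the constant span of
every infinite extracted subsequence of `s`. -/
def IsLarge (B : ℕ → Set α) (E : Set (List α)) (s : ℕ → List (Option α)) : Prop :=
  ∀ w : ℕ → List (Option α), Extracted B s w →
    (E ∩ constSpan B w Set.univ).Nonempty

/-- `E_F = {z ∈ W(S) : w ++ z ∈ E for every w ∈ F}`. -/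
def wordQuot (S : Set α) (E F : Set (List α)) : Set (List α) :=
  { z | z ∈ WordsOver S ∧ ∀ w ∈ F, w ++ z ∈ E }

end HJ



section CarlsonAux
open Filter Set



attribute [local instance] Ultrafilter.mul Ultrafilter.semigroup

section UF
variable {M N : Type*}

theorem uf_mul_mem [Mul M] {u v : Ultrafilter M} {s₁ s₂ s : Set M}
    (h1 : s₁ ∈ u) (h2 : s₂ ∈ v) (h : ∀ x ∈ s₁, ∀ y ∈ s₂, x * y ∈ s) : s ∈ (u * v : Ultrafilter M) := by
  have : ∀ᶠ m in (u : Filter M), ∀ᶠ m' in (v : Filter M), m * m' ∈ s := by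
    filter_upwards [h1] with m hm
    filter_upwards [h2] with m' hm' using h m hm m' hm'
  exact (Ultrafilter.eventually_mul u v (· ∈ s)).2 this

theorem uf_map_mul [Mul M] [Mul N] (f : M → N) (hf : ∀ a b, f (a * b) = f a * f b)
    (u v : Ultrafilter M) : (u * v).map f = u.map f * v.map f := by
  apply Ultrafilter.coe_inj.mp
  apply Filter.ext'
  intro p
  calc (∀ᶠ n in ((u * v).map f : Filter N), p n)
      ↔ ∀ᶠ m in (u * v : Ultrafilter M), p (f m) := Iff.rfl
    _ ↔ ∀ᶠ a in (u : Filter M), ∀ᶠ b in (v : Filter M), p (f (a * b)) :=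
        Ultrafilter.eventually_mul u v _
    _ ↔ ∀ᶠ a in (u : Filter M), ∀ᶠ b in (v : Filter M), p (f a * f b) := by simp only [hf]
    _ ↔ ∀ᶠ n in (u.map f * v.map f : Ultrafilter N), p n :=
        (Ultrafilter.eventually_mul (u.map f) (v.map f) _).symm

theorem uf_map_fix {u : Ultrafilter M} {s : Set M} (hs : s ∈ u) {f : M → M}
    (hf : ∀ x ∈ s, f x = x) : u.map f = u := by
  apply Ultrafilter.coe_inj.mp
  show Filter.map f ↑u = ↑u
  have : f =ᶠ[(u : Filter M)] id := by filter_upwards [hs] with x hx using hf x hx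
  rw [Filter.map_congr this, Filter.map_id]

theorem uf_continuous_map (f : M → N) : Continuous (Ultrafilter.map f) :=
  ultrafilterBasis_is_basis.continuous_iff.2 <| Set.forall_mem_range.mpr fun s => by
    have : Ultrafilter.map f ⁻¹' {u : Ultrafilter N | s ∈ u}
        = {u : Ultrafilter M | f ⁻¹' s ∈ u} := by
      ext u; exact Ultrafilter.mem_map
    rw [this]; exact ultrafilter_isOpen_basic _

end UF


section CRTS
variable {M : Type*} [Semigroup M] [TopologicalSpace M] [CompactSpace M] [T2Space M]

theorem exists_min_left_ideal (cml : ∀ r : M, Continuous (· * r))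
    (X K : Set M) (hXcl : IsClosed X) (hXmul : ∀ x ∈ X, ∀ y ∈ X, x * y ∈ X)
    (hKcl : IsClosed K) (hKne : K.Nonempty) (hKX : K ⊆ X)
    (hKid : ∀ x ∈ X, ∀ k ∈ K, x * k ∈ K) :
    ∃ L ⊆ K, L.Nonempty ∧ IsClosed L ∧ (∀ x ∈ X, ∀ l ∈ L, x * l ∈ L) ∧
      ∀ l ∈ L, (fun x => x * l) '' X = L := by
  have hXne : X.Nonempty := hKne.mono hKX
  set S : Set (Set M) :=
    {L | L ⊆ K ∧ L.Nonempty ∧ IsClosed L ∧ ∀ x ∈ X, ∀ l ∈ L, x * l ∈ L} with hS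
  have hzorn : ∃ m, m ⊆ K ∧ Minimal (· ∈ S) m := by
    apply zorn_superset_nonempty S ?_ K ⟨Subset.rfl, hKne, hKcl, hKid⟩
    intro c hcS hchain hcne
    refine ⟨⋂₀ c, ⟨?_, ?_, ?_, ?_⟩, fun s hs => sInter_subset_of_mem hs⟩
    · obtain ⟨L, hL⟩ := hcne
      exact (sInter_subset_of_mem hL).trans (hcS hL).1
    · haveI : Nonempty c := hcne.to_subtype
      apply IsCompact.nonempty_sInter_of_directed_nonempty_isCompact_isClosed
      · intro a ha b hb
        rcases eq_or_ne a b with rfl | h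
        · exact ⟨a, ha, Subset.rfl, Subset.rfl⟩
        · rcases hchain ha hb h with h' | h'
          exacts [⟨a, ha, Subset.rfl, h'⟩, ⟨b, hb, h', Subset.rfl⟩]
      · exact fun U hU => (hcS hU).2.1
      · exact fun U hU => (hcS hU).2.2.1.isCompact
      · exact fun U hU => (hcS hU).2.2.1
    · exact isClosed_sInter fun U hU => (hcS hU).2.2.1
    · intro x hx l hl
      exact mem_sInter.2 fun U hU => (hcS hU).2.2.2 x hx l (mem_sInter.1 hl U hU)
  obtain ⟨L, hLK, hLmem, hLmin⟩ := hzorn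
  obtain ⟨hLK', hLne, hLcl, hLid⟩ := hLmem
  refine ⟨L, hLK, hLne, hLcl, hLid, fun l hl => ?_⟩
  have hsub : (fun x => x * l) '' X ⊆ L := by
    rintro _ ⟨x, hx, rfl⟩; exact hLid x hx l hl
  have hXlS : (fun x => x * l) '' X ∈ S := by
    refine ⟨hsub.trans hLK', hXne.image _, (hXcl.isCompact.image (cml l)).isClosed, ?_⟩
    rintro x hx _ ⟨y, hy, rfl⟩
    exact ⟨x * y, hXmul x hx y hy, mul_assoc x y l⟩
  exact subset_antisymm hsub (hLmin hXlS hsub)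

/-- Minimal idempotent in a closed subsemigroup `Q`. -/
theorem exists_minimal_idempotent (cml : ∀ r : M, Continuous (· * r))
    (Q : Set M) (hQcl : IsClosed Q) (hQne : Q.Nonempty)
    (hQmul : ∀ x ∈ Q, ∀ y ∈ Q, x * y ∈ Q) :
    ∃ q ∈ Q, q * q = q ∧
      ∀ u ∈ Q, u * u = u → u * q = u → q * u = u → u = q := by
  obtain ⟨L, hLQ, hLne, hLcl, hLid, hLmin⟩ :=
    exists_min_left_ideal cml Q Q hQcl hQmul hQcl hQne Subset.rfl hQmul
  obtain ⟨q, hqL, hq⟩ := exists_idempotent_in_compact_subsemigroup cml L hLne hLcl.isCompact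
    (fun x hx y hy => hLid x (hLQ hx) y hy)
  refine ⟨q, hLQ hqL, hq, fun u hu huu huq hqu => ?_⟩
  have huL : u ∈ L := by
    rw [← hLmin q hqL, ← huq]; exact ⟨u, hu, rfl⟩
  have hqXu : q ∈ (fun x => x * u) '' Q := by rw [hLmin u huL]; exact hqL
  obtain ⟨w, hw, hwu⟩ := hqXu
  have : q * u = q := by rw [← hwu, mul_assoc, huu]
  rw [← hqu, this]

end CRTS

section CRTS
variable {M : Type*} [Semigroup M] [TopologicalSpace M] [CompactSpace M] [T2Space M]

/-- Given an idempotent `q` in the closed subsemigroup `X` and a closed two-sided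
ideal `Y` of `X`, there is an idempotent `p ∈ Y` with `p ≤ q`. -/
theorem exists_idempotent_below (cml : ∀ r : M, Continuous (· * r))
    (X Y : Set M) (hXcl : IsClosed X) (hXmul : ∀ x ∈ X, ∀ y ∈ X, x * y ∈ X)
    (hYcl : IsClosed Y) (hYne : Y.Nonempty) (hYX : Y ⊆ X)
    (hYidl : ∀ x ∈ X, ∀ y ∈ Y, x * y ∈ Y) (hYidr : ∀ x ∈ X, ∀ y ∈ Y, y * x ∈ Y)
    (q : M) (hqX : q ∈ X) (hq : q * q = q) :
    ∃ p ∈ Y, p * p = p ∧ p * q = p ∧ q * p = p := by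
  set K : Set M := (fun y => y * q) '' Y with hK
  have hKcl : IsClosed K := (hYcl.isCompact.image (cml q)).isClosed
  have hKY : K ⊆ Y := by rintro _ ⟨y, hy, rfl⟩; exact hYidr q hqX y hy
  have hKX : K ⊆ X := hKY.trans hYX
  have hKid : ∀ x ∈ X, ∀ k ∈ K, x * k ∈ K := by
    rintro x hx _ ⟨y, hy, rfl⟩
    exact ⟨x * y, hYidl x hx y hy, mul_assoc x y q⟩
  obtain ⟨L, hLK, hLne, hLcl, hLid, -⟩ :=
    exists_min_left_ideal cml X K hXcl hXmul hKcl (hYne.image _) hKX hKid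
  obtain ⟨u, huL, huu⟩ := exists_idempotent_in_compact_subsemigroup cml L hLne hLcl.isCompact
    (fun x hx y hy => hLid x (hKX (hLK hx)) y hy)
  obtain ⟨y, hy, hyq⟩ := hLK huL
  have huq : u * q = u := by rw [← hyq, mul_assoc, hq]
  refine ⟨q * u, hYidl q hqX u (hKY (hLK huL)), ?_, ?_, ?_⟩
  · calc q * u * (q * u) = q * (u * q * u) := by simp only [mul_assoc]
      _ = q * (u * u) := by rw [huq]
      _ = q * u := by rw [huu]
  · rw [mul_assoc, huq]
  · rw [← mul_assoc, hq]
end CRTS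


noncomputable section

private def listSG (β : Type*) : Semigroup (List β) :=
  { mul := (· ++ ·), mul_assoc := List.append_assoc }

attribute [local instance] listSG Ultrafilter.mul Ultrafilter.semigroup

theorem lmul {β : Type*} (u v : List β) : u * v = u ++ v := rfl

variable {α : Type*}

/-- substitution of `a` for the variable, as a word over `Option α`. -/
def hsub (a : α) : List (Option α) → List (Option α) :=
  List.map (fun b => some (b.getD a))

theorem hsub_mul (a : α) (u v : List (Option α)) :
    hsub a (u * v) = hsub a u * hsub a v := List.map_append

/-- words over `A ∪ {x}` -/
def wT (A : Finset α) : Set (List (Option α)) := {l | ∀ a : α, some a ∈ l → a ∈ A}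
/-- constant words over `A` -/
def wC (A : Finset α) : Set (List (Option α)) :=
  {l | (∀ a : α, some a ∈ l → a ∈ A) ∧ none ∉ l}
/-- variable words over `A` -/
def wV (A : Finset α) : Set (List (Option α)) :=
  {l | (∀ a : α, some a ∈ l → a ∈ A) ∧ none ∈ l}

theorem wT_mul {A : Finset α} {u v : List (Option α)} (hu : u ∈ wT A) (hv : v ∈ wT A) :
    u * v ∈ wT A := by
  intro a ha
  rcases List.mem_append.1 ha with h | h
  exacts [hu a h, hv a h]

theorem wC_mul {A : Finset α} {u v : List (Option α)} (hu : u ∈ wC A) (hv : v ∈ wC A) :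
    u * v ∈ wC A := by
  refine ⟨fun a ha => ?_, fun hn => ?_⟩
  · rcases List.mem_append.1 ha with h | h
    exacts [hu.1 a h, hv.1 a h]
  · rcases List.mem_append.1 hn with h | h
    exacts [hu.2 h, hv.2 h]

theorem wC_subset_wT {A : Finset α} : wC A ⊆ wT A := fun _ h => h.1
theorem wV_subset_wT {A : Finset α} : wV A ⊆ wT A := fun _ h => h.1

theorem wV_mul_left {A : Finset α} {u v : List (Option α)} (hu : u ∈ wT A) (hv : v ∈ wV A) :
    u * v ∈ wV A :=
  ⟨fun a ha => by rcases List.mem_append.1 ha with h | h; exacts [hu a h, hv.1 a h],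
   List.mem_append.2 (Or.inr hv.2)⟩

theorem wV_mul_right {A : Finset α} {u v : List (Option α)} (hu : u ∈ wV A) (hv : v ∈ wT A) :
    u * v ∈ wV A :=
  ⟨fun a ha => by rcases List.mem_append.1 ha with h | h; exacts [hu.1 a h, hv a h],
   List.mem_append.2 (Or.inl hu.2)⟩

theorem hsub_mem_wC {A : Finset α} {a : α} (ha : a ∈ A) {l : List (Option α)} (hl : l ∈ wT A) :
    hsub a l ∈ wC A := by
  constructor
  · intro a' ha'
    rcases List.mem_map.1 ha' with ⟨b, hb, hba⟩
    rcases b with _ | c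
    · have : a' = a := by simpa using hba.symm
      exact this ▸ ha
    · have : a' = c := by simpa using hba.symm
      exact this ▸ hl c hb
  · intro hn
    rcases List.mem_map.1 hn with ⟨b, _, hb⟩
    simp at hb

theorem hsub_fix_wC {A : Finset α} (a : α) {l : List (Option α)} (hl : l ∈ wC A) :
    hsub a l = l := by
  have : ∀ b ∈ l, (fun b => some (b.getD a)) b = id b := by
    intro b hb
    rcases b with _ | c
    · exact absurd hb hl.2
    · rfl
  simpa [hsub] using (List.map_congr_left this).trans (List.map_id l)

theorem exists_pq (A : Finset α) :
    ∃ p q : Ultrafilter (List (Option α)),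
      wV A ∈ p ∧ wC A ∈ q ∧ q * q = q ∧ ∀ a ∈ A, p.map (hsub a) = q := by
  have cml := fun V => Ultrafilter.continuous_mul_left (M := List (Option α)) V
  set Z : Set (Ultrafilter (List (Option α))) := {u | wC A ∈ u} with hZ
  obtain ⟨q, hqZ, hqq, hqmin⟩ :=
    exists_minimal_idempotent cml Z (ultrafilter_isClosed_basic _)
      ⟨pure [], by simp [hZ, wC]⟩
      (fun x hx y hy => uf_mul_mem hx hy fun u hu v hv => wC_mul hu hv)
  set X : Set (Ultrafilter (List (Option α))) := {u | wT A ∈ u} with hX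
  set Y : Set (Ultrafilter (List (Option α))) := {u | wV A ∈ u} with hY
  have hYX : Y ⊆ X := fun u hu => mem_of_superset hu wV_subset_wT
  obtain ⟨p, hpY, hpp, hpq, hqp⟩ :=
    exists_idempotent_below cml X Y (ultrafilter_isClosed_basic _)
      (fun x hx y hy => uf_mul_mem hx hy fun u hu v hv => wT_mul hu hv)
      (ultrafilter_isClosed_basic _)
      ⟨pure [none], by simp [hY, wV]⟩ hYX
      (fun x hx y hy => uf_mul_mem hx hy fun u hu v hv => wV_mul_left hu hv)
      (fun x hx y hy => uf_mul_mem hy hx fun u hu v hv => wV_mul_right hu hv)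
      q (mem_of_superset hqZ wC_subset_wT) hqq
  refine ⟨p, q, hpY, hqZ, hqq, fun a ha => ?_⟩
  have hTp : wT A ∈ p := mem_of_superset hpY wV_subset_wT
  have hfixq : q.map (hsub a) = q := uf_map_fix hqZ fun l hl => hsub_fix_wC a hl
  set u := p.map (hsub a) with hu
  have huZ : u ∈ Z := by
    show wC A ∈ p.map (hsub a)
    rw [Ultrafilter.mem_map]
    exact mem_of_superset hTp fun l hl => hsub_mem_wC ha hl
  have huu : u * u = u := by
    rw [hu, ← uf_map_mul _ (hsub_mul a), hpp]
  have huq : u * q = u := by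
    conv_lhs => rw [← hfixq]
    rw [← uf_map_mul _ (hsub_mul a), hpq]
  have hqu : q * u = u := by
    conv_lhs => rw [← hfixq]
    rw [← uf_map_mul _ (hsub_mul a), hqp]
  exact hqmin u huZ huu huq hqu


variable {α : Type*}

/-- finite products (ordered, increasing indices) of substituted words from `f`. -/
def PSpan (A : Finset α) {n : ℕ} (f : Fin (n + 1) → List (Option α)) :
    Set (List (Option α)) :=
  {w | ∃ (k : ℕ) (l : Fin (k + 1) → Fin (n + 1)) (a : Fin (k + 1) → α),
    StrictMono l ∧ (∀ i, a i ∈ A) ∧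
    w = (List.ofFn fun i => hsub (a i) (f (l i))).flatten}

theorem finite_bounded_lists {β : Type*} {G : Set β} (hG : G.Finite) (m : ℕ) :
    {L : List β | L.length ≤ m ∧ ∀ x ∈ L, x ∈ G}.Finite := by
  haveI := hG.to_subtype
  apply Set.Finite.subset ((List.finite_length_le {x // x ∈ G} m).image (List.map Subtype.val))
  rintro L ⟨hlen, hmem⟩
  exact ⟨L.attachWith _ hmem, by simpa, by simp⟩

theorem PSpan_finite (A : Finset α) {n : ℕ} (f : Fin (n + 1) → List (Option α)) :
    (PSpan A f).Finite := by
  have hG : ((fun x : Fin (n + 1) × α => hsub x.2 (f x.1)) ''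
      (Set.univ ×ˢ (A : Set α))).Finite :=
    ((Set.finite_univ.prod A.finite_toSet).image _)
  apply Set.Finite.subset ((finite_bounded_lists hG (n + 1)).image List.flatten)
  rintro w ⟨k, l, a, hl, ha, rfl⟩
  refine ⟨List.ofFn fun i => hsub (a i) (f (l i)), ⟨?_, ?_⟩, rfl⟩
  · simp only [List.length_ofFn]
    have := Fintype.card_le_of_injective l hl.injective
    simpa using this
  · intro x hx
    rcases List.mem_ofFn.1 hx with ⟨i, rfl⟩
    exact ⟨(l i, a i), ⟨trivial, ha i⟩, rfl⟩

def GGInv (A : Finset α) (D : Set (List (Option α))) {n : ℕ}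
    (f : Fin (n + 1) → List (Option α)) : Prop :=
  (∀ i, f i ∈ wV A) ∧ PSpan A f ⊆ D

theorem GGInv_base {A : Finset α} {D : Set (List (Option α))} {w : List (Option α)}
    (hwV : w ∈ wV A) (hwD : ∀ a ∈ A, hsub a w ∈ D) :
    GGInv A D (fun _ : Fin 1 => w) := by
  refine ⟨fun _ => hwV, ?_⟩
  rintro x ⟨k, l, a, hl, ha, rfl⟩
  have hk : k = 0 := by
    have := Fintype.card_le_of_injective l hl.injective
    simpa using this
  subst hk
  simp only [List.ofFn_succ, List.ofFn_zero, List.flatten, List.append_nil]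
  show hsub (a 0) w ++ [] ∈ D
  rw [List.append_nil]
  exact hwD (a 0) (ha 0)

theorem GGInv_snoc {A : Finset α} {D : Set (List (Option α))} {n : ℕ}
    {f : Fin (n + 1) → List (Option α)} (hf : GGInv A D f) {w : List (Option α)}
    (hwV : w ∈ wV A)
    (hwD : ∀ a ∈ A, hsub a w ∈ D ∧ ∀ u ∈ PSpan A f, u ++ hsub a w ∈ D) :
    GGInv A D (Fin.snoc f w) := by
  constructor
  · intro i
    refine Fin.lastCases ?_ ?_ i
    · rw [Fin.snoc_last]; exact hwV
    · intro j; rw [Fin.snoc_castSucc]; exact hf.1 j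
  rintro x ⟨k, l, a, hl, ha, rfl⟩
  by_cases hlast : l (Fin.last k) = Fin.last (n + 1)
  · -- last factor is the new word
    cases k with
    | zero =>
      have hw : ∀ i : Fin 1,
          (Fin.snoc f w : Fin (n + 2) → List (Option α)) (l i) = w := fun i => by
        have : l i = Fin.last (n + 1) := by
          rw [Subsingleton.elim i (Fin.last 0)]; exact hlast
        rw [this, Fin.snoc_last]
      simp only [hw]
      simp only [List.ofFn_succ, List.ofFn_zero, List.flatten_cons, List.flatten_nil,
        List.append_nil]
      exact (hwD _ (ha _)).1
    | succ k' =>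
      rw [show (List.ofFn fun i => hsub (a i)
              ((Fin.snoc f w : Fin (n + 2) → List (Option α)) (l i)))
          = (List.ofFn fun i : Fin (k' + 1) => hsub (a i.castSucc)
              ((Fin.snoc f w : Fin (n + 2) → List (Option α)) (l i.castSucc))).concat
            (hsub (a (Fin.last (k' + 1)))
              ((Fin.snoc f w : Fin (n + 2) → List (Option α)) (l (Fin.last (k' + 1)))))
          from List.ofFn_succ' _]
      have hne : ∀ i : Fin (k' + 1), l i.castSucc ≠ Fin.last (n + 1) := by
        intro i hi
        have h1 : l i.castSucc < l (Fin.last (k' + 1)) :=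
          hl (Fin.castSucc_lt_last i)
        rw [hi, hlast] at h1
        exact lt_irrefl _ h1
      set l' : Fin (k' + 1) → Fin (n + 1) := fun i =>
        ⟨(l i.castSucc).1, by
          have := Fin.val_lt_last (hne i); omega⟩ with hl'
      have hcast : ∀ i : Fin (k' + 1), l i.castSucc = Fin.castSucc (l' i) := by
        intro i; apply Fin.ext; rfl
      have hpre : (List.ofFn fun i : Fin (k' + 1) => hsub (a i.castSucc)
          ((Fin.snoc f w : Fin (n + 2) → List (Option α)) (l i.castSucc))).flatten
          ∈ PSpan A f := by
        refine ⟨k', l', fun i => a i.castSucc, ?_, fun i => ha _, ?_⟩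
        · intro i j hij
          exact hl (Fin.castSucc_lt_castSucc_iff.2 hij)
        · exact congrArg List.flatten (congrArg List.ofFn (funext fun i => by
            rw [hcast i, Fin.snoc_castSucc]))
      simp only [List.concat_eq_append, List.flatten_append, List.flatten_cons,
        List.flatten_nil, List.append_nil]
      rw [hlast, Fin.snoc_last]
      exact (hwD _ (ha (Fin.last (k' + 1)))).2 _ hpre
  · -- new word unused
    have hne : ∀ i, l i ≠ Fin.last (n + 1) := by
      intro i hi
      apply hlast
      have h1 : l i ≤ l (Fin.last k) := hl.monotone (Fin.le_last i)
      rw [hi] at h1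
      exact le_antisymm (Fin.le_last _) h1
    set l' : Fin (k + 1) → Fin (n + 1) := fun i =>
      ⟨(l i).1, by have := Fin.val_lt_last (hne i); omega⟩ with hl'
    apply hf.2
    refine ⟨k, l', a, ?_, ha, ?_⟩
    · intro i j hij
      exact hl hij
    · exact congrArg List.flatten (congrArg List.ofFn (funext fun i => by
        have hci : l i = Fin.castSucc (l' i) := by apply Fin.ext; rfl
        rw [hci, Fin.snoc_castSucc]))

/-- the recursive construction -/
noncomputable def GGpre (A : Finset α) (D : Set (List (Option α)))
    (hstep : ∀ F : Set (List (Option α)), F.Finite → F ⊆ D →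
      ∃ w, w ∈ wV A ∧ ∀ a ∈ A, hsub a w ∈ D ∧ ∀ u ∈ F, u ++ hsub a w ∈ D) :
    (n : ℕ) → {f : Fin (n + 1) → List (Option α) // GGInv A D f}
  | 0 => ⟨fun _ => (hstep ∅ Set.finite_empty (Set.empty_subset D)).choose,
      GGInv_base (hstep ∅ Set.finite_empty (Set.empty_subset D)).choose_spec.1
        (fun a ha => ((hstep ∅ Set.finite_empty (Set.empty_subset D)).choose_spec.2 a ha).1)⟩
  | n + 1 =>
    let prev := GGpre A D hstep n
    let hch := hstep (PSpan A prev.1) (PSpan_finite A prev.1) prev.2.2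
    ⟨Fin.snoc prev.1 hch.choose,
      GGInv_snoc prev.2 hch.choose_spec.1
        (fun a ha => ⟨(hch.choose_spec.2 a ha).1, (hch.choose_spec.2 a ha).2⟩)⟩

theorem GGpre_succ_castSucc (A : Finset α) (D : Set (List (Option α))) (hstep) (n : ℕ)
    (i : Fin (n + 1)) :
    (GGpre A D hstep (n + 1)).1 i.castSucc = (GGpre A D hstep n).1 i := by
  show (Fin.snoc (GGpre A D hstep n).1 _ : Fin (n+2) → List (Option α)) i.castSucc = _
  rw [Fin.snoc_castSucc]

theorem GGpre_coherent (A : Finset α) (D : Set (List (Option α))) (hstep) :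
    ∀ (n : ℕ) (i : Fin (n + 1)),
      (GGpre A D hstep n).1 i = (GGpre A D hstep i.1).1 (Fin.last i.1) := by
  intro n
  induction n with
  | zero =>
    intro i
    have : i = Fin.last 0 := by apply Fin.ext; omega
    rw [this]
    rfl
  | succ n ih =>
    intro i
    refine Fin.lastCases ?_ ?_ i
    · rfl
    · intro j
      rw [GGpre_succ_castSucc]
      simpa using ih j

theorem GG_main (A : Finset α) (D : Set (List (Option α)))
    (hstep : ∀ F : Set (List (Option α)), F.Finite → F ⊆ D →
      ∃ w, w ∈ wV A ∧ ∀ a ∈ A, hsub a w ∈ D ∧ ∀ u ∈ F, u ++ hsub a w ∈ D) :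
    ∃ t : ℕ → List (Option α), (∀ n, t n ∈ wV A) ∧
      ∀ (k : ℕ) (l : Fin (k + 1) → ℕ) (a : Fin (k + 1) → α), StrictMono l →
        (∀ i, a i ∈ A) →
        (List.ofFn fun i => hsub (a i) (t (l i))).flatten ∈ D := by
  refine ⟨fun n => (GGpre A D hstep n).1 (Fin.last n), fun n => (GGpre A D hstep n).2.1 _, ?_⟩
  intro k l a hl ha
  set N := l (Fin.last k) with hN
  have hle : ∀ i, l i ≤ N := fun i => hl.monotone (Fin.le_last i)
  set l' : Fin (k + 1) → Fin (N + 1) := fun i => ⟨l i, by have := hle i; omega⟩ with hl'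
  have heq : ∀ i, (GGpre A D hstep N).1 (l' i) = (GGpre A D hstep (l i)).1 (Fin.last (l i)) := by
    intro i
    rw [GGpre_coherent A D hstep N (l' i)]
  have : (List.ofFn fun i => hsub (a i) ((GGpre A D hstep N).1 (l' i))).flatten ∈ D := by
    apply (GGpre A D hstep N).2.2
    refine ⟨k, l', a, ?_, ha, rfl⟩
    intro i j hij
    exact hl hij
  show (List.ofFn fun i => hsub (a i)
      ((GGpre A D hstep (l i)).1 (Fin.last (l i)))).flatten ∈ D
  have hsame : (List.ofFn fun i => hsub (a i) ((GGpre A D hstep (l i)).1 (Fin.last (l i))))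
      = (List.ofFn fun i => hsub (a i) ((GGpre A D hstep N).1 (l' i))) :=
    congrArg List.ofFn (funext fun i => by rw [heq i])
  rw [hsame]
  exact this

variable {α : Type*}

theorem HJ.substC_eq (a₀ a : α) (s : List (Option α)) :
    List.map (fun b => Option.getD b a₀) (hsub a s) = HJ.substC s a := by
  rw [hsub, List.map_map]; rfl

theorem main_final {α : Type*} (A : Finset α) (hA : A.Nonempty)
    (r : ℕ) (hr : 1 ≤ r) (c : List α → Fin r) :
    ∃ t : ℕ → List (Option α),
      (∀ n, t n ∈ wV A) ∧
      ∃ col : Fin r,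
        ∀ (n : ℕ) (m : Fin (n + 1) → ℕ) (a : Fin (n + 1) → α),
          StrictMono m → (∀ j, a j ∈ A) →
          c ((List.ofFn fun j => HJ.substC (t (m j)) (a j)).flatten) = col := by
  obtain ⟨a₀, ha₀⟩ := hA
  set c' : List (Option α) → Fin r := fun w => c (w.map (fun b => b.getD a₀)) with hc'
  obtain ⟨p, q, hpV, hqC, hqq, hpq⟩ := exists_pq A
  -- pick the color
  have hcol : ∃ i : Fin r, {w | c' w = i} ∈ q := by
    by_contra h
    push_neg at h
    have h2 : ∀ i : Fin r, {w | c' w = i}ᶜ ∈ q :=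
      fun i => (Ultrafilter.compl_mem_iff_notMem).2 (h i)
    have h3 : (⋂ i : Fin r, {w | c' w = i}ᶜ) ∈ q := by
      rw [← Ultrafilter.mem_coe, Filter.iInter_mem]
      exact h2
    obtain ⟨w, hw⟩ := Ultrafilter.nonempty_of_mem h3
    exact (mem_iInter.1 hw (c' w)) rfl
  obtain ⟨col, hB⟩ := hcol
  set B : Set (List (Option α)) := {w | c' w = col} with hBdef
  -- the star operation
  have hq2 : ∀ s ∈ q, {m | {m' | m ++ m' ∈ s} ∈ q} ∈ q := by
    intro s hs
    have : s ∈ (q * q : Ultrafilter (List (Option α))) := by rw [hqq]; exact hs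
    exact (Ultrafilter.eventually_mul q q (· ∈ s)).1 this
  set D : Set (List (Option α)) := B ∩ {w | {w' | w ++ w' ∈ B} ∈ q} with hDdef
  have hD : D ∈ q := inter_mem hB (hq2 B hB)
  have hDB : D ⊆ B := fun w hw => hw.1
  have hDstep : ∀ u ∈ D, {w' | u ++ w' ∈ D} ∈ q := by
    intro u hu
    have h1 : {w' | u ++ w' ∈ B} ∈ q := hu.2
    have h2 : {w' | {w'' | w' ++ w'' ∈ {v | u ++ v ∈ B}} ∈ q} ∈ q := hq2 _ h1
    have h3 := inter_mem h1 h2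
    refine mem_of_superset h3 ?_
    rintro w' ⟨hw1, hw2⟩
    refine ⟨hw1, ?_⟩
    show {w'' | (u ++ w') ++ w'' ∈ B} ∈ q
    have : {w'' | (u ++ w') ++ w'' ∈ B} = {w'' | w' ++ w'' ∈ {v | u ++ v ∈ B}} := by
      ext w''; simp [List.append_assoc]
    rw [this]
    exact hw2
  -- the step lemma
  have hstep : ∀ F : Set (List (Option α)), F.Finite → F ⊆ D →
      ∃ w, w ∈ wV A ∧ ∀ a ∈ A, hsub a w ∈ D ∧ ∀ u ∈ F, u ++ hsub a w ∈ D := by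
    intro F hF hFD
    have hC : (D ∩ ⋂ u ∈ F, {w' | u ++ w' ∈ D}) ∈ q := by
      refine inter_mem hD ?_
      exact (Filter.biInter_mem hF).2 fun u hu => hDstep u (hFD hu)
    have hS : (wV A ∩ ⋂ a ∈ (A : Set α), hsub a ⁻¹' (D ∩ ⋂ u ∈ F, {w' | u ++ w' ∈ D})) ∈ p := by
      refine inter_mem hpV ?_
      refine (Filter.biInter_mem A.finite_toSet).2 fun a ha => ?_
      have : hsub a ⁻¹' (D ∩ ⋂ u ∈ F, {w' | u ++ w' ∈ D}) ∈ p := by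
        rw [← Ultrafilter.mem_map, hpq a ha]; exact hC
      exact this
    obtain ⟨w, hw1, hw2⟩ := Ultrafilter.nonempty_of_mem hS
    refine ⟨w, hw1, fun a ha => ?_⟩
    have := mem_iInter₂.1 hw2 a ha
    exact ⟨this.1, fun u hu => (mem_iInter₂.1 this.2 u hu)⟩
  obtain ⟨t, htV, htD⟩ := GG_main A D hstep
  refine ⟨t, htV, col, fun n m a hm ha => ?_⟩
  have hmem := htD n m a hm ha
  have hcc : c' ((List.ofFn fun i => hsub (a i) (t (m i))).flatten) = col := hDB hmem
  rw [hc'] at hcc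
  convert hcc using 2
  simp only [List.map_flatten, List.map_ofFn]
  exact congrArg List.flatten
    (congrArg List.ofFn (funext fun j => (HJ.substC_eq a₀ (a j) (t (m j))).symm))

end

end CarlsonAux

open HJ in
/-- **Carlson / Furstenberg–Katznelson.** For every finite nonempty alphabet `A` and
every finite coloring of the words over `A` there is a sequence of variable words
all of whose ordered substitution-concatenations get the same color. -/
theorem stmt0 {α : Type*} (A : Finset α) (hA : A.Nonempty)
    (r : ℕ) (hr : 1 ≤ r) (c : List α → Fin r) :
    ∃ t : ℕ → List (Option α),
      (∀ n, IsVarWord (A : Set α) (t n)) ∧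
      ∃ col : Fin r,
        ∀ (n : ℕ) (m : Fin (n + 1) → ℕ) (a : Fin (n + 1) → α),
          StrictMono m → (∀ j, a j ∈ A) →
          c ((List.ofFn fun j => substC (t (m j)) (a j)).flatten) = col := by
  obtain ⟨t, htV, col, hcol⟩ := main_final A hA r hr c
  exact ⟨t, fun n => ⟨fun a ha => Finset.mem_coe.2 ((htV n).1 a ha), (htV n).2⟩,
    col, hcol⟩
end

section
/- Let (A_n)_{n=0}^∞ be an increasing sequence (A_0 ⊆ A_1 ⊆ ⋯) of finite nonempty alphabets and let A = ⋃_{n∈ℕ} A_n. Then for every finite coloring of W(A) there exists an infinite sequence (t_n(x))_{n=0}^∞ of variable words over A such that for every n ∈ ℕ, every choice of indices m_0 < m_1 < ⋯ < m_n, and every choice of letters a_0 ∈ A_{m_0}, a_1 ∈ A_{m_1}, …, a_n ∈ A_{m_n}, the concatenated words t_{m_0}(a_0) t_{m_1}(a_1) ⋯ t_{m_n}(a_n) all receive the same color. -/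
open Filter

attribute [local instance] Ultrafilter.mul Ultrafilter.semigroup

namespace HJP

lemma mem_mul' {M : Type*} [Semigroup M] {U V : Ultrafilter M} {D : Set M} :
    D ∈ U * V ↔ {m : M | {m' : M | m * m' ∈ D} ∈ V} ∈ U := by
  have h := Ultrafilter.eventually_mul U V (· ∈ D)
  simpa only [Filter.eventually_iff, Ultrafilter.mem_coe, Set.setOf_mem_eq] using h

lemma map_mul_ultra {M N : Type*} [Semigroup M] [Semigroup N] (g : M → N)
    (hg : ∀ x y, g (x * y) = g x * g y) (U V : Ultrafilter M) :
    (U * V).map g = U.map g * V.map g := by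
  ext D
  rw [Ultrafilter.mem_map, mem_mul', mem_mul', Ultrafilter.mem_map]
  have hset : (g ⁻¹' {n : N | {n' : N | n * n' ∈ D} ∈ V.map g})
      = {m : M | {m' : M | m * m' ∈ g ⁻¹' D} ∈ V} := by
    ext m
    simp only [Set.mem_preimage, Set.mem_setOf_eq, Ultrafilter.mem_map, Set.preimage_setOf_eq,
      hg]

  rw [hset]


variable {α : Type*}

def sub (a : α) (s : FreeMonoid (Option α)) : FreeMonoid α :=
  FreeMonoid.ofList (HJ.substC (FreeMonoid.toList s) a)

lemma toList_sub (a : α) (s : FreeMonoid (Option α)) :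
    FreeMonoid.toList (sub a s) = HJ.substC (FreeMonoid.toList s) a := rfl

lemma sub_mul (a : α) (s t : FreeMonoid (Option α)) : sub a (s * t) = sub a s * sub a t := by
  apply FreeMonoid.toList.injective
  simp [sub, HJ.substC, FreeMonoid.toList_mul]

/-- the set of variable words over `⋃ n, A n` -/
def VW (A : ℕ → Finset α) : Set (FreeMonoid (Option α)) :=
  {s | HJ.IsVarWord (⋃ n, (A n : Set α)) (FreeMonoid.toList s)}

lemma VW_mul {A : ℕ → Finset α} {s t : FreeMonoid (Option α)} (hs : s ∈ VW A) (ht : t ∈ VW A) :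
    s * t ∈ VW A := by
  obtain ⟨hs1, hs2⟩ := hs
  obtain ⟨ht1, ht2⟩ := ht
  constructor
  · intro a ha
    rw [FreeMonoid.toList_mul, List.mem_append] at ha
    rcases ha with h | h
    · exact hs1 a h
    · exact ht1 a h
  · rw [FreeMonoid.toList_mul, List.mem_append]
    exact Or.inl hs2

/-- the basic "substitutions agree" sets -/
def Eset (A : ℕ → Finset α) (D : Set (FreeMonoid α)) (n : ℕ) : Set (FreeMonoid (Option α)) :=
  {s | ∀ a ∈ A n, ∀ b ∈ A n, (sub a s ∈ D ↔ sub b s ∈ D)}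

lemma Eset_anti (A : ℕ → Finset α) (hA : Monotone A) (D : Set (FreeMonoid α)) {n N : ℕ}
    (h : n ≤ N) : Eset A D N ⊆ Eset A D n := by
  intro s hs a ha b hb
  exact hs a (hA h ha) b (hA h hb)

lemma iff_mem_of_agree {M : Type*} (U : Ultrafilter M) {P Q I : Set M} (hI : I ∈ U)
    (h : ∀ s ∈ I, s ∈ P ↔ s ∈ Q) : P ∈ U ↔ Q ∈ U := by
  constructor
  · intro hP
    exact Filter.mem_of_superset (Filter.inter_mem hP hI) (fun s hs => (h s hs.2).1 hs.1)
  · intro hQ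
    exact Filter.mem_of_superset (Filter.inter_mem hQ hI) (fun s hs => (h s hs.2).2 hs.1)

/-- E-sets in `U` give equality of substitution pushforwards. -/
lemma push_eq_of_Esets {A : ℕ → Finset α} {U : Ultrafilter (FreeMonoid (Option α))}
    (hU : ∀ D n, Eset A D n ∈ U) {n : ℕ} {a b : α} (ha : a ∈ A n) (hb : b ∈ A n) :
    U.map (sub a) = U.map (sub b) := by
  ext D
  rw [Ultrafilter.mem_map, Ultrafilter.mem_map]
  exact iff_mem_of_agree U (hU D n) (fun s hs => hs a ha b hb)

/-- Equality of substitution pushforwards gives the E-sets. -/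
lemma Esets_of_push_eq {A : ℕ → Finset α} {U : Ultrafilter (FreeMonoid (Option α))}
    (hU : ∀ n, ∀ a ∈ A n, ∀ b ∈ A n, U.map (sub a) = U.map (sub b)) (D : Set (FreeMonoid α))
    (n : ℕ) : Eset A D n ∈ U := by
  have h1 : Eset A D n = ⋂ a ∈ A n, ⋂ b ∈ A n, {s | sub a s ∈ D ↔ sub b s ∈ D} := by
    ext s
    simp only [Eset, Set.mem_setOf_eq, Set.mem_iInter]
  rw [h1]
  rw [← Ultrafilter.mem_coe, Filter.biInter_finset_mem]
  intro a ha
  rw [Filter.biInter_finset_mem]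
  intro b hb
  have hPQ : (sub a ⁻¹' D) ∈ U ↔ (sub b ⁻¹' D) ∈ U := by
    rw [← Ultrafilter.mem_map, ← Ultrafilter.mem_map, hU n a ha b hb]
  rcases U.mem_or_compl_mem (sub a ⁻¹' D) with hP | hP
  · have hQ := hPQ.1 hP
    exact Filter.mem_of_superset (Filter.inter_mem hP hQ)
      (fun s hs => by simp only [Set.mem_setOf_eq]; exact iff_of_true hs.1 hs.2)
  · have hQ : (sub b ⁻¹' D)ᶜ ∈ U := by
      rw [Ultrafilter.compl_mem_iff_notMem] at hP ⊢
      intro h; exact hP (hPQ.2 h)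
    exact Filter.mem_of_superset (Filter.inter_mem hP hQ)
      (fun s hs => by
        simp only [Set.mem_setOf_eq]
        exact iff_of_false hs.1 hs.2)
lemma exists_in_all (A : ℕ → Finset α) (hA : Monotone A)
    (T : Finset (Set (FreeMonoid (Option α))))
    (hT : ∀ X ∈ T, X = VW A ∨ ∃ D n, X = Eset A D n) :
    (⋂₀ (T : Set (Set (FreeMonoid (Option α))))).Nonempty := by
  classical
  let d : Set (FreeMonoid (Option α)) → Set (FreeMonoid α) := fun X =>
    if h : ∃ D n, X = Eset A D n then h.choose else ∅
  let f : Set (FreeMonoid (Option α)) → ℕ := fun X =>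
    if h : ∃ D n, X = Eset A D n then h.choose_spec.choose else 0
  have hdf : ∀ X, (∃ D n, X = Eset A D n) → X = Eset A (d X) (f X) := by
    intro X h
    simp only [d, f, dif_pos h]
    exact h.choose_spec.choose_spec
  set N := T.sup f with hN
  obtain ⟨ι, ιfin, hHJ⟩ := Combinatorics.Line.exists_mono_in_high_dimension
    (↥(A N)) ({X // X ∈ T} → Bool)
  letI := ιfin
  let e : ι ≃ Fin (Fintype.card ι) := Fintype.equivFin ι
  let wd : (ι → ↥(A N)) → FreeMonoid α := fun v =>
    FreeMonoid.ofList (List.ofFn fun j => (v (e.symm j) : α))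
  obtain ⟨l, c0, hl⟩ := hHJ (fun v X => decide (wd v ∈ d ↑X))
  let s : FreeMonoid (Option α) :=
    FreeMonoid.ofList (List.ofFn fun j => (l.idxFun (e.symm j)).map (Subtype.val))
  have htls : FreeMonoid.toList s
      = List.ofFn fun j => (l.idxFun (e.symm j)).map (Subtype.val) := rfl
  have hsub : ∀ x : ↥(A N), sub (↑x) s = wd (l x) := by
    intro x
    apply FreeMonoid.toList.injective
    show HJ.substC (FreeMonoid.toList s) (↑x)
        = List.ofFn fun j => ((l x) (e.symm j) : α)
    rw [htls]
    unfold HJ.substC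
    rw [List.map_ofFn]
    congr 1
    funext j
    rcases h : l.idxFun (e.symm j) with _ | y <;>
      simp [Combinatorics.Line.coe_apply, h, Function.comp]
  have hsVW : s ∈ VW A := by
    constructor
    · intro a ha
      rw [htls, List.mem_ofFn] at ha
      obtain ⟨j, hj⟩ := ha
      rcases h : l.idxFun (e.symm j) with _ | y
      · exact absurd hj (by simp [h])
      · simp only [h, Option.map_some, Option.some.injEq] at hj
        subst hj
        exact Set.mem_iUnion.2 ⟨N, y.2⟩
    · obtain ⟨i, hi⟩ := l.proper
      rw [htls, List.mem_ofFn]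
      exact ⟨e i, by simp [hi]⟩
  refine ⟨s, Set.mem_sInter.2 fun X hX' => ?_⟩
  have hX : X ∈ T := hX'
  rcases hT X hX with rfl | hE
  · exact hsVW
  · have hXE := hdf X hE
    have hfN : f X ≤ N := Finset.le_sup hX
    rw [hXE]
    apply Eset_anti A hA (d X) hfN
    intro a ha b hb
    have h1 := congrFun (hl ⟨a, ha⟩) ⟨X, hX⟩
    have h2 := congrFun (hl ⟨b, hb⟩) ⟨X, hX⟩
    rw [hsub ⟨a, ha⟩, hsub ⟨b, hb⟩]
    exact decide_eq_decide.mp (h1.trans h2.symm)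

lemma exists_idem (A : ℕ → Finset α) (hA : Monotone A) (hne : ∀ n, (A n).Nonempty) :
    ∃ (U : Ultrafilter (FreeMonoid (Option α))) (p : Ultrafilter (FreeMonoid α)),
      VW A ∈ U ∧ p * p = p ∧ ∀ n, ∀ a ∈ A n, U.map (sub a) = p := by
  classical
  set G : Set (Set (FreeMonoid (Option α))) :=
    insert (VW A) {X | ∃ D n, X = Eset A D n} with hG
  have hFIP : ∀ T : Finset (Set (FreeMonoid (Option α))),
      (↑T : Set (Set (FreeMonoid (Option α)))) ⊆ G → (⋂₀ (↑T : Set (Set (FreeMonoid (Option α))))).Nonempty := by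
    intro T hTG
    refine exists_in_all A hA T (fun X hX => ?_)
    have := hTG hX
    rw [hG, Set.mem_insert_iff] at this
    exact this
  obtain ⟨U0, hU0⟩ := Ultrafilter.exists_ultrafilter_of_finite_inter_nonempty G hFIP
  set Z : Set (Ultrafilter (FreeMonoid (Option α))) :=
    {U | VW A ∈ U ∧ ∀ D n, Eset A D n ∈ U} with hZdef
  have hU0Z : U0 ∈ Z := by
    constructor
    · exact hU0 (Set.mem_insert _ _)
    · intro D n
      exact hU0 (Set.mem_insert_iff.2 (Or.inr ⟨D, n, rfl⟩))
  have hZc : IsClosed Z := by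
    have hZeq : Z = {U : Ultrafilter (FreeMonoid (Option α)) | VW A ∈ U} ∩
        ⋂ (D : Set (FreeMonoid α)), ⋂ (n : ℕ),
          {U : Ultrafilter (FreeMonoid (Option α)) | Eset A D n ∈ U} := by
      ext U
      simp only [hZdef, Set.mem_setOf_eq, Set.mem_inter_iff, Set.mem_iInter]
    rw [hZeq]
    exact (ultrafilter_isClosed_basic _).inter
      (isClosed_iInter fun D => isClosed_iInter fun n => ultrafilter_isClosed_basic _)
  have hZmul : ∀ U ∈ Z, ∀ V ∈ Z, U * V ∈ Z := by
    intro U hU V hV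
    constructor
    · rw [← Ultrafilter.mem_coe] at *
      rw [Ultrafilter.mem_coe, mem_mul']
      refine Filter.mem_of_superset hU.1 (fun s hs => ?_)
      show {m' | s * m' ∈ VW A} ∈ V
      exact Filter.mem_of_superset hV.1 (fun t ht => VW_mul hs ht)
    · apply Esets_of_push_eq
      intro n a ha b hb
      rw [map_mul_ultra (sub a) (sub_mul a) U V, map_mul_ultra (sub b) (sub_mul b) U V,
        push_eq_of_Esets hU.2 ha hb, push_eq_of_Esets hV.2 ha hb]
  obtain ⟨U, hUZ, hUU⟩ := exists_idempotent_in_compact_subsemigroup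
    (fun V => Ultrafilter.continuous_mul_left V) Z ⟨U0, hU0Z⟩ hZc.isCompact hZmul
  set a0 : α := (hne 0).choose with ha0def
  have ha0 : a0 ∈ A 0 := (hne 0).choose_spec
  refine ⟨U, U.map (sub a0), hUZ.1, ?_, ?_⟩
  · rw [← map_mul_ultra (sub a0) (sub_mul a0) U U, hUU]
  · intro n a ha
    exact push_eq_of_Esets hUZ.2 ha (hA (Nat.zero_le n) ha0)

set_option maxHeartbeats 2000000 in
lemma selection (A : ℕ → Finset α)
    (U : Ultrafilter (FreeMonoid (Option α))) (p : Ultrafilter (FreeMonoid α))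
    (hUVW : VW A ∈ U) (hpp : p * p = p) (hpush : ∀ n, ∀ a ∈ A n, U.map (sub a) = p)
    (C : Set (FreeMonoid α)) (hC : C ∈ p) :
    ∃ tw : ℕ → FreeMonoid (Option α),
      (∀ k, tw k ∈ VW A) ∧
      ∀ (n : ℕ) (m : Fin (n + 1) → ℕ) (a : Fin (n + 1) → α), StrictMono m →
        (∀ j, a j ∈ A (m j)) →
        (List.ofFn fun j => sub (a j) (tw (m j))).prod ∈ C := by
  classical
  have key : ∀ (F : Finset (FreeMonoid α)), (∀ w ∈ F, {z | w * z ∈ C} ∈ p) → ∀ k : ℕ,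
      ∃ s, s ∈ VW A ∧ ∀ w ∈ F, ∀ a ∈ A k,
        w * sub a s ∈ C ∧ {z | (w * sub a s) * z ∈ C} ∈ p := by
    intro F hF k
    have hG : ∀ w ∈ F, {v | w * v ∈ C ∧ {z | (w * v) * z ∈ C} ∈ p} ∈ p := by
      intro w hw
      have h1 : {z | w * z ∈ C} ∈ p * p := by rw [hpp]; exact hF w hw
      rw [mem_mul'] at h1
      have h2 : {v | {z | (w * v) * z ∈ C} ∈ p} ∈ p := by
        have heq : ∀ v : FreeMonoid α,
            {m' | v * m' ∈ {z | w * z ∈ C}} = {z | (w * v) * z ∈ C} := by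
          intro v; ext z; simp [Set.mem_setOf_eq, mul_assoc]
        simpa only [heq] using h1
      refine Filter.mem_of_superset (Filter.inter_mem (hF w hw) h2) (fun v hv => ⟨hv.1, hv.2⟩)
    have hbig : (VW A ∩ ⋂ w ∈ F, ⋂ a ∈ A k,
        sub a ⁻¹' {v | w * v ∈ C ∧ {z | (w * v) * z ∈ C} ∈ p}) ∈ U := by
      refine Filter.inter_mem hUVW ?_
      rw [Filter.biInter_finset_mem]
      intro w hw
      rw [Filter.biInter_finset_mem]
      intro a ha
      rw [Ultrafilter.mem_coe, ← Ultrafilter.mem_map, hpush k a ha]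
      exact hG w hw
    obtain ⟨s, hs1, hs2⟩ := U.nonempty_of_mem hbig
    refine ⟨s, hs1, fun w hw a ha => ?_⟩
    have := Set.mem_iInter₂.1 (Set.mem_iInter₂.1 hs2 w hw) a ha
    exact this
  have inv0 : ∀ w ∈ ({1} : Finset (FreeMonoid α)), {z | w * z ∈ C} ∈ p := by
    intro w hw
    rw [Finset.mem_singleton] at hw
    subst hw
    simpa only [one_mul, Set.setOf_mem_eq] using hC
  have step : ∀ (F : Finset (FreeMonoid α)) (hF : ∀ w ∈ F, {z | w * z ∈ C} ∈ p) (k : ℕ),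
      ∀ w ∈ F ∪ (F ×ˢ A k).image (fun q => q.1 * sub q.2 (Classical.choose (key F hF k))),
        {z | w * z ∈ C} ∈ p := by
    intro F hF k w hw
    rw [Finset.mem_union] at hw
    rcases hw with hw | hw
    · exact hF w hw
    · rw [Finset.mem_image] at hw
      obtain ⟨⟨w', a⟩, hq, rfl⟩ := hw
      rw [Finset.mem_product] at hq
      exact ((Classical.choose_spec (key F hF k)).2 w' hq.1 a hq.2).2
  let state : ℕ → {F : Finset (FreeMonoid α) // ∀ w ∈ F, {z | w * z ∈ C} ∈ p} := fun k =>
    Nat.rec ⟨{1}, inv0⟩ (fun k ih =>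
      ⟨ih.1 ∪ (ih.1 ×ˢ A k).image (fun q => q.1 * sub q.2 (Classical.choose (key ih.1 ih.2 k))),
        step ih.1 ih.2 k⟩) k
  let tw : ℕ → FreeMonoid (Option α) := fun k =>
    Classical.choose (key (state k).1 (state k).2 k)
  have hspec : ∀ k, tw k ∈ VW A ∧ ∀ w ∈ (state k).1, ∀ a ∈ A k,
      w * sub a (tw k) ∈ C ∧ {z | (w * sub a (tw k)) * z ∈ C} ∈ p :=
    fun k => Classical.choose_spec (key (state k).1 (state k).2 k)
  have hsucc : ∀ k, (state (k + 1)).1 =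
      (state k).1 ∪ ((state k).1 ×ˢ A k).image (fun q => q.1 * sub q.2 (tw k)) := fun k => rfl
  have hmono : ∀ j k, j ≤ k → (state j).1 ⊆ (state k).1 := by
    intro j k hjk
    induction hjk with
    | refl => exact subset_rfl
    | @step k' h ih =>
      refine ih.trans ?_
      rw [hsucc k']
      exact Finset.subset_union_left
  have hone : ∀ k, (1 : FreeMonoid α) ∈ (state k).1 := fun k =>
    hmono 0 k (Nat.zero_le k) (Finset.mem_singleton_self 1)
  have hclose : ∀ k, ∀ w ∈ (state k).1, ∀ a ∈ A k,
      w * sub a (tw k) ∈ (state (k + 1)).1 ∧ w * sub a (tw k) ∈ C := by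
    intro k w hw a ha
    constructor
    · rw [hsucc k, Finset.mem_union]
      exact Or.inr (Finset.mem_image.2 ⟨(w, a), Finset.mem_product.2 ⟨hw, ha⟩, rfl⟩)
    · exact ((hspec k).2 w hw a ha).1
  refine ⟨tw, fun k => (hspec k).1, ?_⟩
  have main : ∀ (n : ℕ) (m : Fin (n + 1) → ℕ) (a : Fin (n + 1) → α), StrictMono m →
      (∀ j, a j ∈ A (m j)) →
      (List.ofFn fun j => sub (a j) (tw (m j))).prod ∈ (state (m (Fin.last n) + 1)).1 ∧
      (List.ofFn fun j => sub (a j) (tw (m j))).prod ∈ C := by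
    intro n
    induction n with
    | zero =>
      intro m a hm ha
      have h1 : (List.ofFn fun j : Fin 1 => sub (a j) (tw (m j))).prod
          = 1 * sub (a 0) (tw (m 0)) := by
        simp
      rw [h1, show Fin.last 0 = 0 from rfl]
      exact hclose (m 0) 1 (hone (m 0)) (a 0) (ha 0)
    | succ n ih =>
      intro m a hm ha
      have hsplit : (List.ofFn fun j : Fin (n + 2) => sub (a j) (tw (m j))).prod =
          (List.ofFn fun j : Fin (n + 1) =>
            sub (a j.castSucc) (tw (m j.castSucc))).prod *
          sub (a (Fin.last (n + 1))) (tw (m (Fin.last (n + 1)))) := by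
        rw [List.ofFn_succ', List.prod_concat]
      rw [hsplit]
      have hm' : StrictMono (fun j : Fin (n + 1) => m j.castSucc) :=
        fun i j h => hm (Fin.castSucc_lt_castSucc_iff.2 h)
      obtain ⟨hF', hC'⟩ := ih (fun j => m j.castSucc) (fun j => a j.castSucc) hm'
        (fun j => ha j.castSucc)
      have hlt : m ((Fin.last n).castSucc) + 1 ≤ m (Fin.last (n + 1)) :=
        Nat.succ_le_of_lt (hm (Fin.castSucc_lt_last (Fin.last n)))
      have hF'' := hmono _ _ hlt hF'
      exact hclose (m (Fin.last (n + 1))) _ hF'' (a (Fin.last (n + 1))) (ha (Fin.last (n + 1)))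
  intro n m a hm ha
  exact (main n m a hm ha).2

end HJP

open HJ in
/-- Infinitary Hales–Jewett for an increasing sequence of finite alphabets. -/
theorem stmt1 {α : Type*} (A : ℕ → Finset α) (hmono : Monotone A)
    (hne : ∀ n, (A n).Nonempty)
    (r : ℕ) (hr : 1 ≤ r) (c : List α → Fin r) :
    ∃ t : ℕ → List (Option α),
      (∀ n, IsVarWord (⋃ n, (A n : Set α)) (t n)) ∧
      ∃ col : Fin r,
        ∀ (n : ℕ) (m : Fin (n + 1) → ℕ) (a : Fin (n + 1) → α),
          StrictMono m → (∀ j, a j ∈ A (m j)) →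
          c ((List.ofFn fun j => substC (t (m j)) (a j)).flatten) = col := by
  classical
  obtain ⟨U, p, hUVW, hpp, hpush⟩ := HJP.exists_idem A hmono hne
  obtain ⟨col, hcol⟩ := (p.map fun w => c (FreeMonoid.toList w)).eq_pure_of_finite
  have hC : {w : FreeMonoid α | c (FreeMonoid.toList w) = col} ∈ p := by
    have h1 : {col} ∈ p.map fun w => c (FreeMonoid.toList w) := by
      rw [hcol]
      show {col} ∈ (pure col : Ultrafilter (Fin r))
      exact Filter.singleton_mem_pure
    rw [Ultrafilter.mem_map] at h1
    exact Filter.mem_of_superset h1 (fun w hw => hw)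
  obtain ⟨tw, htwVW, hmain⟩ := HJP.selection A U p hUVW hpp hpush _ hC
  refine ⟨fun k => FreeMonoid.toList (tw k), fun n => htwVW n, col, ?_⟩
  intro n m a hm ha
  have h := hmain n m a hm ha
  have heq : (List.ofFn fun j => substC (FreeMonoid.toList (tw (m j))) (a j)).flatten
      = FreeMonoid.toList ((List.ofFn fun j => HJP.sub (a j) (tw (m j))).prod) := by
    rw [FreeMonoid.toList_prod, List.map_ofFn]
    rfl
  show c ((List.ofFn fun j => substC (FreeMonoid.toList (tw (m j))) (a j)).flatten) = col
  rw [heq]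
  exact h
end

section
/- Let A be a finite nonempty alphabet, E ⊆ W(A), and 𝐬 an infinite sequence of variable words over A such that E is large in 𝐬. If r ≥ 2 and E = E_1 ∪ ⋯ ∪ E_r, then there exist 1 ≤ i ≤ r and an infinite extracted subsequence 𝐭 of 𝐬 such that E_i is large in 𝐭. -/
namespace HJP
open HJ

variable {α : Type*} {C : Set α}

lemma substV_none (s : List (Option α)) : substV s none = s := by
  simp only [substV]
  conv_rhs => rw [← List.map_id s]
  refine List.map_congr_left fun c _ => ?_
  cases c <;> rfl

lemma substV_substV (s : List (Option α)) (b c : Option α) :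
    substV (substV s b) c = substV s (Option.elim b c some) := by
  simp only [substV, List.map_map]
  refine List.map_congr_left fun d _ => ?_
  cases d <;> rfl

lemma substC_substV (s : List (Option α)) (b : Option α) (a : α) :
    substC (substV s b) a = substC s (b.getD a) := by
  simp only [substC, substV, List.map_map]
  refine List.map_congr_left fun d _ => ?_
  cases d <;> cases b <;> rfl

lemma substV_flatten (L : List (List (Option α))) (b : Option α) :
    substV L.flatten b = (L.map (substV · b)).flatten := by
  simp [substV, List.map_flatten]

lemma substC_flatten (L : List (List (Option α))) (a : α) :
    substC L.flatten a = (L.map (substC · a)).flatten := by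
  simp [substC, List.map_flatten]

lemma flatten_flatMap {β γ : Type*} (p : List β) (h : β → List (List γ)) :
    (p.flatMap h).flatten = (p.map fun q => (h q).flatten).flatten := by
  induction p with
  | nil => simp
  | cons q p ih => simp [ih]

/-- List version of the variable span. -/
def VSp (C : Set α) (s : ℕ → List (Option α)) (I : Set ℕ) :
    Set (List (Option α)) :=
  { w | ∃ p : List (ℕ × Option α), p ≠ [] ∧
      p.Pairwise (fun q q' => q.1 < q'.1) ∧
      (∀ q ∈ p, q.1 ∈ I ∧ ∀ a : α, q.2 = some a → a ∈ C) ∧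
      none ∈ w ∧ w = (p.map fun q => substV (s q.1) q.2).flatten }

/-- List version of the constant span. -/
def CSp (C : Set α) (s : ℕ → List (Option α)) (I : Set ℕ) :
    Set (List α) :=
  { w | ∃ p : List (ℕ × α), p ≠ [] ∧
      p.Pairwise (fun q q' => q.1 < q'.1) ∧
      (∀ q ∈ p, q.1 ∈ I ∧ q.2 ∈ C) ∧
      w = (p.map fun q => substC (s q.1) q.2).flatten }

lemma exists_ofFn {β : Type*} (p : List β) (hp : p ≠ []) :
    ∃ (n : ℕ) (f : Fin (n + 1) → β), p = List.ofFn f := by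
  obtain ⟨n, hn⟩ := Nat.exists_eq_succ_of_ne_zero
    (show p.length ≠ 0 by simpa using hp)
  refine ⟨n, fun i => p.get (Fin.cast hn.symm i), ?_⟩
  conv_lhs => rw [← List.ofFn_get p, List.ofFn_congr hn]

lemma varSpan_eq (s : ℕ → List (Option α)) (I : Set ℕ) :
    varSpan (fun _ => C) s I = VSp C s I := by
  ext w
  constructor
  · rintro ⟨n, l, b, hmono, hI, hC, hnone, rfl⟩
    refine ⟨List.ofFn (fun i => (l i, b i)), ?_, ?_, ?_, hnone, ?_⟩
    · simp [List.ofFn_eq_nil_iff]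
    · rw [List.pairwise_ofFn]
      intro i j hij
      exact hmono hij
    · intro q hq
      rw [List.mem_ofFn] at hq
      obtain ⟨i, rfl⟩ := hq
      exact ⟨hI i, hC i⟩
    · rw [List.map_ofFn]
      rfl
  · rintro ⟨p, hne, hpair, hmem, hnone, rfl⟩
    obtain ⟨n, f, rfl⟩ := exists_ofFn p hne
    rw [List.pairwise_ofFn] at hpair
    refine ⟨n, fun i => (f i).1, fun i => (f i).2, fun i j hij => hpair hij,
      fun i => (hmem (f i) (by rw [List.mem_ofFn]; exact ⟨i, rfl⟩)).1,
      fun i => (hmem (f i) (by rw [List.mem_ofFn]; exact ⟨i, rfl⟩)).2,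
      hnone, ?_⟩
    rw [List.map_ofFn]
    rfl

lemma constSpan_eq (s : ℕ → List (Option α)) (I : Set ℕ) :
    constSpan (fun _ => C) s I = CSp C s I := by
  ext w
  constructor
  · rintro ⟨n, l, a, hmono, hI, hC, rfl⟩
    refine ⟨List.ofFn (fun i => (l i, a i)), ?_, ?_, ?_, ?_⟩
    · simp [List.ofFn_eq_nil_iff]
    · rw [List.pairwise_ofFn]
      intro i j hij
      exact hmono hij
    · intro q hq
      rw [List.mem_ofFn] at hq
      obtain ⟨i, rfl⟩ := hq
      exact ⟨hI i, hC i⟩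
    · rw [List.map_ofFn]
      rfl
  · rintro ⟨p, hne, hpair, hmem, rfl⟩
    obtain ⟨n, f, rfl⟩ := exists_ofFn p hne
    rw [List.pairwise_ofFn] at hpair
    refine ⟨n, fun i => (f i).1, fun i => (f i).2, fun i j hij => hpair hij,
      fun i => (hmem (f i) (by rw [List.mem_ofFn]; exact ⟨i, rfl⟩)).1,
      fun i => (hmem (f i) (by rw [List.mem_ofFn]; exact ⟨i, rfl⟩)).2, ?_⟩
    rw [List.map_ofFn]
    rfl

lemma VSp_comp {s u : ℕ → List (Option α)} {k : ℕ → ℕ} (hk : Monotone k)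
    {a b : ℕ} (hu : ∀ j, a ≤ j → j < b → u j ∈ VSp C s (Set.Ico (k j) (k (j + 1))))
    {w : List (Option α)} (hw : w ∈ VSp C u (Set.Ico a b)) :
    w ∈ VSp C s (Set.Ico (k a) (k b)) := by
  classical
  obtain ⟨p, hne, hpair, hmem, hnone, hweq⟩ := hw
  simp only [VSp, Set.mem_setOf_eq] at hu
  choose! pq hq1 hq2 hq3 hq4 hq5 using hu
  set F : ℕ × Option α → List (ℕ × Option α) :=
    fun q => (pq q.1).map (fun r => (r.1, Option.elim r.2 q.2 some)) with hF
  have hIco : ∀ q ∈ p, a ≤ q.1 ∧ q.1 < b := by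
    intro q hq
    have := (hmem q hq).1
    exact ⟨this.1, this.2⟩
  have hr3 : ∀ q ∈ p, ∀ r ∈ pq q.1,
      (k q.1 ≤ r.1 ∧ r.1 < k (q.1 + 1)) ∧ ∀ a' : α, r.2 = some a' → a' ∈ C := by
    intro q hq r hr
    obtain ⟨h1, h2⟩ := hIco q hq
    have := hq3 q.1 h1 h2 r hr
    exact ⟨⟨this.1.1, this.1.2⟩, this.2⟩
  refine ⟨p.flatMap F, ?_, ?_, ?_, hnone, ?_⟩
  · intro h
    rw [List.flatMap_eq_nil_iff] at h
    obtain ⟨q, hq⟩ := List.exists_mem_of_ne_nil p hne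
    obtain ⟨h1, h2⟩ := hIco q hq
    have hnil := h q hq
    rw [hF, List.map_eq_nil_iff] at hnil
    exact hq1 q.1 h1 h2 hnil
  · rw [List.flatMap_def, List.pairwise_flatten]
    constructor
    · intro l' hl'
      rw [List.mem_map] at hl'
      obtain ⟨q, hq, rfl⟩ := hl'
      obtain ⟨h1, h2⟩ := hIco q hq
      exact (hq2 q.1 h1 h2).map _ (fun r r' h => h)
    · rw [List.pairwise_map]
      refine hpair.imp_of_mem ?_
      intro q q' hq hq' hlt x hx y hy
      rw [hF, List.mem_map] at hx hy
      obtain ⟨r, hr, rfl⟩ := hx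
      obtain ⟨r', hr', rfl⟩ := hy
      have h1 := (hr3 q hq r hr).1
      have h2 := (hr3 q' hq' r' hr').1
      have : k (q.1 + 1) ≤ k q'.1 := hk (by omega)
      simp only
      omega
  · intro q'' hq''
    rw [List.mem_flatMap] at hq''
    obtain ⟨q, hq, hq''⟩ := hq''
    rw [hF, List.mem_map] at hq''
    obtain ⟨r, hr, rfl⟩ := hq''
    obtain ⟨ha1, hb1⟩ := hIco q hq
    obtain ⟨⟨h1, h2⟩, h3⟩ := hr3 q hq r hr
    constructor
    · constructor
      · exact le_trans (hk ha1) h1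
      · exact lt_of_lt_of_le h2 (hk (by omega))
    · intro a' ha'
      cases hrr : r.2 with
      | none =>
        rw [hrr] at ha'
        simp only [Option.elim] at ha'
        exact (hmem q hq).2 a' ha'
      | some a'' =>
        rw [hrr] at ha'
        simp only [Option.elim, Option.some.injEq] at ha'
        rw [← ha']
        exact h3 a'' hrr
  · rw [hweq, List.map_flatMap, flatten_flatMap]
    congr 1
    refine List.map_congr_left fun q hq => ?_
    obtain ⟨ha1, hb1⟩ := hIco q hq
    rw [hq5 q.1 ha1 hb1, substV_flatten, List.map_map, hF, List.map_map]
    congr 1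
    refine List.map_congr_left fun r _ => ?_
    simp [Function.comp, substV_substV]

lemma CSp_comp {t u : ℕ → List (Option α)} {k : ℕ → ℕ} (hk : Monotone k)
    {b : ℕ} (hu : ∀ j, j < b → t j ∈ VSp C u (Set.Ico (k j) (k (j + 1))))
    {w : List α} (hw : w ∈ CSp C t (Set.Iio b)) :
    w ∈ CSp C u Set.univ := by
  classical
  obtain ⟨p, hne, hpair, hmem, hweq⟩ := hw
  simp only [VSp, Set.mem_setOf_eq] at hu
  choose! pq hq1 hq2 hq3 hq4 hq5 using hu
  set F : ℕ × α → List (ℕ × α) :=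
    fun q => (pq q.1).map (fun r => (r.1, r.2.getD q.2)) with hF
  have hIco : ∀ q ∈ p, q.1 < b := fun q hq => (hmem q hq).1
  have hr3 : ∀ q ∈ p, ∀ r ∈ pq q.1,
      (k q.1 ≤ r.1 ∧ r.1 < k (q.1 + 1)) ∧ ∀ a' : α, r.2 = some a' → a' ∈ C := by
    intro q hq r hr
    have := hq3 q.1 (hIco q hq) r hr
    exact ⟨⟨this.1.1, this.1.2⟩, this.2⟩
  refine ⟨p.flatMap F, ?_, ?_, ?_, ?_⟩
  · intro h
    rw [List.flatMap_eq_nil_iff] at h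
    obtain ⟨q, hq⟩ := List.exists_mem_of_ne_nil p hne
    have hnil := h q hq
    rw [hF, List.map_eq_nil_iff] at hnil
    exact hq1 q.1 (hIco q hq) hnil
  · rw [List.flatMap_def, List.pairwise_flatten]
    constructor
    · intro l' hl'
      rw [List.mem_map] at hl'
      obtain ⟨q, hq, rfl⟩ := hl'
      exact (hq2 q.1 (hIco q hq)).map _ (fun r r' h => h)
    · rw [List.pairwise_map]
      refine hpair.imp_of_mem ?_
      intro q q' hq hq' hlt x hx y hy
      rw [hF, List.mem_map] at hx hy
      obtain ⟨r, hr, rfl⟩ := hx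
      obtain ⟨r', hr', rfl⟩ := hy
      have h1 := (hr3 q hq r hr).1
      have h2 := (hr3 q' hq' r' hr').1
      have : k (q.1 + 1) ≤ k q'.1 := hk (by omega)
      simp only
      omega
  · intro q'' hq''
    rw [List.mem_flatMap] at hq''
    obtain ⟨q, hq, hq''⟩ := hq''
    rw [hF, List.mem_map] at hq''
    obtain ⟨r, hr, rfl⟩ := hq''
    refine ⟨trivial, ?_⟩
    cases hrr : r.2 with
    | none =>
      simp only [hrr, Option.getD]
      exact (hmem q hq).2
    | some a'' =>
      simp only [hrr, Option.getD]
      exact (hr3 q hq r hr).2 a'' hrr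
  · rw [hweq, List.map_flatMap, flatten_flatMap]
    congr 1
    refine List.map_congr_left fun q hq => ?_
    rw [hq5 q.1 (hIco q hq), substC_flatten, List.map_map, hF, List.map_map]
    congr 1
    refine List.map_congr_left fun r _ => ?_
    simp [Function.comp, substC_substV]

lemma extracted_refl {s : ℕ → List (Option α)} (hs : ∀ n, none ∈ s n) :
    Extracted (fun _ => C) s s := by
  intro l
  refine ⟨id, rfl, strictMono_id, fun i _ => ?_⟩
  rw [varSpan_eq]
  refine ⟨[(i, none)], by simp, by simp, ?_, hs i, by simp [substV_none]⟩
  intro q hq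
  simp only [List.mem_singleton] at hq
  subst hq
  exact ⟨by simp [Set.mem_Ico], by simp⟩

lemma extracted_trans {s u t : ℕ → List (Option α)}
    (h1 : Extracted (fun _ => C) s u) (h2 : Extracted (fun _ => C) u t) :
    Extracted (fun _ => C) s t := by
  intro l
  obtain ⟨m, hm0, hmmono, hmem⟩ := h2 l
  obtain ⟨k, hk0, hkmono, hkmem⟩ := h1 (m (l + 1))
  refine ⟨k ∘ m, by simp [hm0, hk0], hkmono.comp hmmono, fun i hi => ?_⟩
  rw [varSpan_eq]
  have hti := hmem i hi
  rw [varSpan_eq] at hti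
  refine VSp_comp hkmono.monotone (fun j hj1 hj2 => ?_) hti
  have hjle : j ≤ m (l + 1) := by
    have : m (i + 1) ≤ m (l + 1) := hmmono.monotone (by omega)
    omega
  have := hkmem j hjle
  rw [varSpan_eq] at this
  exact this

lemma constSpan_subset {u t : ℕ → List (Option α)}
    (h : Extracted (fun _ => C) u t) :
    constSpan (fun _ => C) t Set.univ ⊆ constSpan (fun _ => C) u Set.univ := by
  intro w hw
  rw [constSpan_eq] at hw ⊢
  obtain ⟨p, hne, hpair, hmemp, hweq⟩ := hw
  set b : ℕ := (p.map Prod.fst).sum + 1 with hb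
  obtain ⟨m, hm0, hmmono, hmem⟩ := h ((p.map Prod.fst).sum)
  refine CSp_comp hmmono.monotone (fun j hj => ?_)
    (⟨p, hne, hpair, fun q hq => ?_, hweq⟩ : w ∈ CSp C t (Set.Iio b))
  · have := hmem j (by omega)
    rw [varSpan_eq] at this
    exact this
  · refine ⟨?_, (hmemp q hq).2⟩
    have : q.1 ≤ (p.map Prod.fst).sum :=
      List.le_sum_of_mem (List.mem_map_of_mem (f := Prod.fst) hq)
    simp only [Set.mem_Iio, hb]
    omega

end HJP


open HJ in
/-- If a large set is partitioned into finitely many pieces, some piece is large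
in some extracted subsequence. -/
theorem stmt4 {α : Type*} (A : Finset α) (hA : A.Nonempty)
    (E : Set (List α)) (hE : E ⊆ WordsOver (A : Set α))
    (s : ℕ → List (Option α)) (hs : ∀ n, IsVarWord (A : Set α) (s n))
    (hlarge : IsLarge (fun _ => (A : Set α)) E s)
    (r : ℕ) (hr : 2 ≤ r) (E' : Fin r → Set (List α)) (hE' : E = ⋃ i, E' i) :
    ∃ (i : Fin r) (t : ℕ → List (Option α)),
      Extracted (fun _ => (A : Set α)) s t ∧
      IsLarge (fun _ => (A : Set α)) (E' i) t := by
  classical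
  by_contra hcon
  push_neg at hcon
  have hrefl : Extracted (fun _ => (A : Set α)) s s :=
    HJP.extracted_refl (fun n => (hs n).2)
  have key : ∀ i : ℕ, i ≤ r → ∃ t, Extracted (fun _ => (A : Set α)) s t ∧
      ∀ j : Fin r, (j : ℕ) < i →
        E' j ∩ constSpan (fun _ => (A : Set α)) t Set.univ = ∅ := by
    intro i
    induction i with
    | zero => exact fun _ => ⟨s, hrefl, fun j hj => absurd hj (by omega)⟩
    | succ i ih =>
      intro hi
      obtain ⟨t, ht, hprev⟩ := ih (by omega)
      have hir : i < r := hi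
      have hnl := hcon ⟨i, hir⟩ t ht
      rw [IsLarge] at hnl
      push_neg at hnl
      obtain ⟨t', ht', hempty⟩ := hnl
      have hempty' : E' ⟨i, hir⟩ ∩ constSpan (fun _ => (A : Set α)) t' Set.univ = ∅ := by
        first
        | exact hempty
        | rwa [Set.not_nonempty_iff_eq_empty] at hempty
      refine ⟨t', HJP.extracted_trans ht ht', fun j hj => ?_⟩
      rcases Nat.lt_or_ge (j : ℕ) i with h | h
      · have hsub := HJP.constSpan_subset ht'
        have hpj := hprev j h
        rw [Set.eq_empty_iff_forall_notMem] at hpj ⊢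
        exact fun w hw => hpj w ⟨hw.1, hsub hw.2⟩
      · have hji : j = ⟨i, hir⟩ := Fin.ext (by simp only [Fin.val_mk]; omega)
        rw [hji]
        exact hempty'
  obtain ⟨t, ht, hempty⟩ := key r le_rfl
  obtain ⟨z, hzE, hzC⟩ := hlarge t ht
  rw [hE', Set.mem_iUnion] at hzE
  obtain ⟨j, hzj⟩ := hzE
  have hj := hempty j j.isLt
  rw [Set.eq_empty_iff_forall_notMem] at hj
  exact hj z ⟨hzj, hzC⟩
end

section
/- Let A be a finite nonempty alphabet, E ⊆ W(A), and 𝐬 = (s_n(x))_{n=0}^∞ an infinite sequence of variable words over A such that E is large in 𝐬. Then there exist m ∈ ℕ and a variable word w(x) ∈ ⟨(s_n(x))_{n=0}^m⟩_v such that {w(a) : a ∈ A} ⊆ E. -/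
namespace HJ

variable {α : Type*}

lemma substV_none (s : List (Option α)) : substV s none = s := by
  have h : (fun c : Option α => Option.elim c none some) = id := by
    funext c; cases c <;> rfl
  simp [substV, h]

lemma substC_substV (s : List (Option α)) (b : Option α) (a : α) :
    substC (substV s b) a = substC s (b.getD a) := by
  simp only [substC, substV, List.map_map]
  apply List.map_congr_left
  intro c _
  cases c <;> cases b <;> rfl

lemma substC_flatten_ofFn {n : ℕ} (g : Fin n → List (Option α)) (a : α) :
    substC (List.ofFn g).flatten a = (List.ofFn fun i => substC (g i) a).flatten := by
  simp [substC, List.map_flatten, List.map_ofFn, Function.comp_def]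

lemma substC_flatten_substV {n : ℕ} (s : ℕ → List (Option α)) (l : Fin n → ℕ)
    (b : Fin n → Option α) (a : α) :
    substC (List.ofFn fun i => substV (s (l i)) (b i)).flatten a
      = (List.ofFn fun i => substC (s (l i)) ((b i).getD a)).flatten := by
  rw [substC_flatten_ofFn]
  have h : (fun i => substC (substV (s (l i)) (b i)) a)
      = fun i => substC (s (l i)) ((b i).getD a) :=
    funext fun i => substC_substV _ _ _
  rw [h]

lemma strictMono_finAppend {m n : ℕ} {f : Fin m → ℕ} {g : Fin n → ℕ}
    (hf : StrictMono f) (hg : StrictMono g) (hfg : ∀ i j, f i < g j) :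
    StrictMono (Fin.append f g) := by
  intro i j hij
  induction i using Fin.addCases with
  | left i =>
    induction j using Fin.addCases with
    | left j =>
      rw [Fin.append_left, Fin.append_left]
      refine hf ?_
      have h' : (i : ℕ) < (j : ℕ) := by
        have := (Fin.lt_def).1 hij
        simpa using this
      exact h'
    | right j =>
      rw [Fin.append_left, Fin.append_right]
      exact hfg i j
  | right i =>
    induction j using Fin.addCases with
    | left j =>
      exfalso
      have h' := (Fin.lt_def).1 hij
      simp only [Fin.coe_natAdd, Fin.coe_castAdd] at h'
      have := j.isLt
      omega
    | right j =>
      rw [Fin.append_right, Fin.append_right]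
      refine hg ?_
      have h' := (Fin.lt_def).1 hij
      simp only [Fin.coe_natAdd] at h'
      exact (Fin.lt_def).2 (by omega)

lemma blocks_append {m n : ℕ} {γ δ : Type*} (F : ℕ → γ → List δ)
    (l₁ : Fin m → ℕ) (a₁ : Fin m → γ) (l₂ : Fin n → ℕ) (a₂ : Fin n → γ) :
    (List.ofFn fun i => F (Fin.append l₁ l₂ i) (Fin.append a₁ a₂ i)).flatten
      = (List.ofFn fun i => F (l₁ i) (a₁ i)).flatten
        ++ (List.ofFn fun i => F (l₂ i) (a₂ i)).flatten := by
  have h : (fun i => F (Fin.append l₁ l₂ i) (Fin.append a₁ a₂ i))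
      = Fin.append (fun i => F (l₁ i) (a₁ i)) (fun i => F (l₂ i) (a₂ i)) := by
    funext i
    induction i using Fin.addCases with
    | left i => simp [Fin.append_left]
    | right i => simp [Fin.append_right]
  rw [h, List.ofFn_fin_append, List.flatten_append]

lemma blocksV_append {m n : ℕ} (s : ℕ → List (Option α))
    (l₁ : Fin m → ℕ) (b₁ : Fin m → Option α) (l₂ : Fin n → ℕ) (b₂ : Fin n → Option α) :
    (List.ofFn fun i => substV (s (Fin.append l₁ l₂ i)) (Fin.append b₁ b₂ i)).flatten
      = (List.ofFn fun i => substV (s (l₁ i)) (b₁ i)).flatten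
        ++ (List.ofFn fun i => substV (s (l₂ i)) (b₂ i)).flatten :=
  blocks_append (fun k c => substV (s k) c) l₁ b₁ l₂ b₂

lemma blocksC_append {m n : ℕ} (s : ℕ → List (Option α))
    (l₁ : Fin m → ℕ) (a₁ : Fin m → α) (l₂ : Fin n → ℕ) (a₂ : Fin n → α) :
    (List.ofFn fun i => substC (s (Fin.append l₁ l₂ i)) (Fin.append a₁ a₂ i)).flatten
      = (List.ofFn fun i => substC (s (l₁ i)) (a₁ i)).flatten
        ++ (List.ofFn fun i => substC (s (l₂ i)) (a₂ i)).flatten :=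
  blocks_append (fun k c => substC (s k) c) l₁ a₁ l₂ a₂

lemma blocksD_append {m n : ℕ} (s : ℕ → List (Option α)) (a : α)
    (l₁ : Fin m → ℕ) (b₁ : Fin m → Option α) (l₂ : Fin n → ℕ) (b₂ : Fin n → Option α) :
    (List.ofFn fun i => substC (s (Fin.append l₁ l₂ i)) ((Fin.append b₁ b₂ i).getD a)).flatten
      = (List.ofFn fun i => substC (s (l₁ i)) ((b₁ i).getD a)).flatten
        ++ (List.ofFn fun i => substC (s (l₂ i)) ((b₂ i).getD a)).flatten :=
  blocks_append (fun k c => substC (s k) (Option.getD c a)) l₁ b₁ l₂ b₂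


lemma mem_constSpan_of_repr {B : ℕ → Set α} {s : ℕ → List (Option α)} {I : Set ℕ}
    {w : List α} (n : ℕ) (hn : 0 < n) (l : Fin n → ℕ) (a : Fin n → α)
    (h1 : StrictMono l) (h2 : ∀ i, l i ∈ I) (h3 : ∀ i, a i ∈ B (l i))
    (h4 : w = (List.ofFn fun i => substC (s (l i)) (a i)).flatten) :
    w ∈ constSpan B s I := by
  obtain ⟨n', rfl⟩ : ∃ n', n = n' + 1 := ⟨n - 1, by omega⟩
  exact ⟨n', l, a, h1, h2, h3, h4⟩

lemma mem_varSpan_of_repr {B : ℕ → Set α} {s : ℕ → List (Option α)} {I : Set ℕ}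
    {w : List (Option α)} (n : ℕ) (hn : 0 < n) (l : Fin n → ℕ) (b : Fin n → Option α)
    (h1 : StrictMono l) (h2 : ∀ i, l i ∈ I)
    (h3 : ∀ i, ∀ a : α, b i = some a → a ∈ B (l i)) (h4 : none ∈ w)
    (h5 : w = (List.ofFn fun i => substV (s (l i)) (b i)).flatten) :
    w ∈ varSpan B s I := by
  obtain ⟨n', rfl⟩ : ∃ n', n = n' + 1 := ⟨n - 1, by omega⟩
  exact ⟨n', l, b, h1, h2, h3, h4, h5⟩

lemma constSpan_mono {B : ℕ → Set α} {s : ℕ → List (Option α)} {I J : Set ℕ}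
    (h : I ⊆ J) : constSpan B s I ⊆ constSpan B s J := by
  rintro w ⟨n, l, a, h1, h2, h3, h4⟩
  exact ⟨n, l, a, h1, fun i => h (h2 i), h3, h4⟩

lemma varSpan_mono {B : ℕ → Set α} {s : ℕ → List (Option α)} {I J : Set ℕ}
    (h : I ⊆ J) : varSpan B s I ⊆ varSpan B s J := by
  rintro w ⟨n, l, b, h1, h2, h3, h4, h5⟩
  exact ⟨n, l, b, h1, fun i => h (h2 i), h3, h4, h5⟩

lemma constSpan_append {B : ℕ → Set α} {s : ℕ → List (Option α)} {I J : Set ℕ}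
    (hIJ : ∀ i ∈ I, ∀ j ∈ J, i < j) {f g : List α}
    (hf : f ∈ constSpan B s I) (hg : g ∈ constSpan B s J) :
    f ++ g ∈ constSpan B s (I ∪ J) := by
  obtain ⟨n₁, l₁, a₁, h₁, hI₁, hA₁, rfl⟩ := hf
  obtain ⟨n₂, l₂, a₂, h₂, hI₂, hA₂, rfl⟩ := hg
  refine mem_constSpan_of_repr ((n₁ + 1) + (n₂ + 1)) (by omega) (Fin.append l₁ l₂)
    (Fin.append a₁ a₂)
    (strictMono_finAppend h₁ h₂ (fun i j => hIJ _ (hI₁ i) _ (hI₂ j))) ?_ ?_ ?_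
  · intro i
    induction i using Fin.addCases with
    | left i => rw [Fin.append_left]; exact Or.inl (hI₁ i)
    | right i => rw [Fin.append_right]; exact Or.inr (hI₂ i)
  · intro i
    induction i using Fin.addCases with
    | left i => simp only [Fin.append_left]; exact hA₁ i
    | right i => simp only [Fin.append_right]; exact hA₂ i
  · exact (blocksC_append s l₁ a₁ l₂ a₂).symm

lemma substC_mem_constSpan {A : Set α} {s : ℕ → List (Option α)} {I : Set ℕ}
    {u : List (Option α)} (hu : u ∈ varSpan (fun _ => A) s I) {a : α} (ha : a ∈ A) :
    substC u a ∈ constSpan (fun _ => A) s I := by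
  obtain ⟨n, l, b, hmono, hI, hB, -, rfl⟩ := hu
  refine ⟨n, l, fun i => (b i).getD a, hmono, hI, ?_, ?_⟩
  · intro i
    show (b i).getD a ∈ A
    cases hb : b i with
    | none => simpa using ha
    | some c => simpa using hB i c hb
  · exact substC_flatten_substV s l b a

lemma constSpan_append_varSpan {A : Set α} {s : ℕ → List (Option α)} {I J : Set ℕ}
    (hIJ : ∀ i ∈ I, ∀ j ∈ J, i < j) {f : List α} {u : List (Option α)}
    (hf : f ∈ constSpan (fun _ => A) s I) (hu : u ∈ varSpan (fun _ => A) s J) :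
    ∃ v ∈ varSpan (fun _ => A) s (I ∪ J), ∀ a : α, substC v a = f ++ substC u a := by
  obtain ⟨n₁, l₁, a₁, h₁, hI₁, hA₁, rfl⟩ := hf
  obtain ⟨n₂, l₂, b₂, h₂, hI₂, hB₂, hnone₂, rfl⟩ := hu
  refine ⟨(List.ofFn fun i : Fin ((n₁ + 1) + (n₂ + 1)) =>
      substV (s (Fin.append l₁ l₂ i)) (Fin.append (fun i => some (a₁ i)) b₂ i)).flatten,
    mem_varSpan_of_repr ((n₁ + 1) + (n₂ + 1)) (by omega) (Fin.append l₁ l₂)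
      (Fin.append (fun i => some (a₁ i)) b₂)
      (strictMono_finAppend h₁ h₂ (fun i j => hIJ _ (hI₁ i) _ (hI₂ j))) ?_ ?_ ?_ rfl, ?_⟩
  · intro i
    induction i using Fin.addCases with
    | left i => rw [Fin.append_left]; exact Or.inl (hI₁ i)
    | right i => rw [Fin.append_right]; exact Or.inr (hI₂ i)
  · intro i
    induction i using Fin.addCases with
    | left i =>
      simp only [Fin.append_left]
      rintro a ha
      obtain rfl : a₁ i = a := by simpa using ha
      exact hA₁ i
    | right i =>
      simp only [Fin.append_right]
      exact hB₂ i
  · rw [blocksV_append s l₁ (fun i => some (a₁ i)) l₂ b₂]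
    exact List.mem_append_right _ hnone₂
  · intro a
    rw [substC_flatten_substV s (Fin.append l₁ l₂) (Fin.append (fun i => some (a₁ i)) b₂) a,
      blocksD_append s a l₁ (fun i => some (a₁ i)) l₂ b₂,
      substC_flatten_substV s l₂ b₂ a]
    simp

lemma flatten_substV_mem_varSpan {A : Set α} {s : ℕ → List (Option α)}
    (hs : ∀ k, IsVarWord A (s k)) (p n : ℕ) (hn : 0 < n) (b : Fin n → Option α)
    (hb : ∀ i (a : α), b i = some a → a ∈ A) (hnone : ∃ i, b i = none) :
    (List.ofFn fun i => substV (s (p + ↑i)) (b i)).flatten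
      ∈ varSpan (fun _ => A) s (Set.Ico p (p + n)) := by
  obtain ⟨n', rfl⟩ : ∃ n', n = n' + 1 := ⟨n - 1, by omega⟩
  refine ⟨n', fun i => p + ↑i, b, ?_, ?_, hb, ?_, rfl⟩
  · intro i j hij
    show p + (i : ℕ) < p + (j : ℕ)
    have h' : (i : ℕ) < (j : ℕ) := hij
    omega
  · intro i
    show p + (i : ℕ) ∈ Set.Ico p (p + (n' + 1))
    have := i.isLt
    simp only [Set.mem_Ico]
    omega
  · obtain ⟨i, hi⟩ := hnone
    refine List.mem_flatten.2 ⟨substV (s (p + ↑i)) (b i), ?_, ?_⟩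
    · exact List.mem_ofFn.2 ⟨i, rfl⟩
    · rw [hi, substV_none]; exact (hs _).2

lemma finHJ (β : Type*) [Finite β] (κ : Type*) [Finite κ] :
    ∃ n : ℕ, ∀ C : (Fin n → β) → κ, ∃ l : Combinatorics.Line β (Fin n),
      ∃ c, ∀ x, C (fun i => (l.idxFun i).getD x) = c := by
  obtain ⟨ι, _inst, hι⟩ := Combinatorics.Line.exists_mono_in_high_dimension β κ
  refine ⟨Fintype.card ι, fun C => ?_⟩
  let e : Fin (Fintype.card ι) ≃ ι := (Fintype.equivFin ι).symm
  obtain ⟨l, c, hc⟩ := hι fun v => C (v ∘ e)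
  refine ⟨⟨l.idxFun ∘ e, ?_⟩, c, fun x => hc x⟩
  obtain ⟨i, hi⟩ := l.proper
  exact ⟨e.symm i, by simp [hi]⟩

end HJ

namespace HJ

lemma key_lemma {α : Type*} (A : Finset α) (hA : A.Nonempty) (E : Set (List α))
    (s : ℕ → List (Option α)) (hs : ∀ n, IsVarWord (A : Set α) (s n))
    (H : ∀ (m : ℕ) (v : List (Option α)), v ∈ varSpan (fun _ => (A : Set α)) s (Set.Iic m) →
      ∃ a ∈ A, substC v a ∉ E)
    (p : ℕ) (F : Finset (List α)) :
    ∃ (q : ℕ) (u : List (Option α)), p < q ∧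
      ((∀ f ∈ F, f ∈ constSpan (fun _ => (A : Set α)) s (Set.Iio p)) →
        (u ∈ varSpan (fun _ => (A : Set α)) s (Set.Ico p q) ∧
         ∀ a ∈ A, substC u a ∉ E ∧ ∀ f ∈ F, f ++ substC u a ∉ E)) := by
  classical
  by_cases hF : ∀ f ∈ F, f ∈ constSpan (fun _ => (A : Set α)) s (Set.Iio p)
  case neg => exact ⟨p + 1, s p, Nat.lt_succ_self p, fun h => absurd h hF⟩
  haveI : Finite (Option ↥F) := Finite.of_fintype _
  obtain ⟨n, hn⟩ := finHJ (↥A) (Set (Option ↥F))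
  set cw : (Fin n → ↥A) → List α :=
    fun v => (List.ofFn fun i => substC (s (p + ↑i)) (↑(v i) : α)).flatten with hcw
  obtain ⟨lin, Gc, hGc⟩ := hn
    (fun v => {of : Option ↥F | (Option.elim of [] Subtype.val) ++ cw v ∈ E})
  obtain ⟨i₀, hi₀⟩ := lin.proper
  have npos : 0 < n := i₀.pos
  set u : List (Option α) :=
    (List.ofFn fun i : Fin n => substV (s (p + ↑i)) (Option.map Subtype.val (lin.idxFun i))).flatten
    with hu
  have hu_mem : u ∈ varSpan (fun _ => (A : Set α)) s (Set.Ico p (p + n)) := by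
    refine flatten_substV_mem_varSpan hs p n npos _ ?_ ⟨i₀, by simp [hi₀]⟩
    intro i a hai
    rcases hx : lin.idxFun i with _ | c
    · rw [hx] at hai; simp at hai
    · rw [hx] at hai
      simp only [Option.map_some] at hai
      obtain rfl : (c : α) = a := by simpa using hai
      exact c.2
  have hsub : ∀ (a : α) (ha : a ∈ A), substC u a = cw (fun i => (lin.idxFun i).getD ⟨a, ha⟩) := by
    intro a ha
    rw [hu, substC_flatten_substV s (fun i : Fin n => p + ↑i)
      (fun i => Option.map Subtype.val (lin.idxFun i)) a]
    rw [hcw]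
    have he : ∀ i : Fin n, ((Option.map (Subtype.val) (lin.idxFun i)).getD a)
        = (((lin.idxFun i).getD ⟨a, ha⟩ : ↥A) : α) := by
      intro i; cases hx : lin.idxFun i <;> simp [hx]
    exact congrArg List.flatten (congrArg List.ofFn
      (funext fun i => congrArg (substC _) (he i)))
  rcases Set.eq_empty_or_nonempty Gc with hGe | ⟨of, hof⟩
  · refine ⟨p + n, u, by omega, fun _ => ⟨hu_mem, fun a ha => ⟨?_, ?_⟩⟩⟩
    · intro hE
      have hmem : (none : Option ↥F) ∈ Gc := by
        rw [← hGc ⟨a, ha⟩]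
        show (Option.elim none [] Subtype.val) ++ cw _ ∈ E
        rw [← hsub a ha] at *
        simpa using hE
      rw [hGe] at hmem
      exact hmem
    · intro f hf hE
      have hmem : (some (⟨f, hf⟩ : ↥F)) ∈ Gc := by
        rw [← hGc ⟨a, ha⟩]
        show (Option.elim (some (⟨f, hf⟩ : ↥F)) [] Subtype.val) ++ cw _ ∈ E
        rw [← hsub a ha]
        simpa using hE
      rw [hGe] at hmem
      exact hmem
  · exfalso
    have hIco_Iic : Set.Ico p (p + n) ⊆ Set.Iic (p + n) := fun x hx => le_of_lt hx.2
    cases of with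
    | none =>
      obtain ⟨a, ha, hnotE⟩ := H (p + n) u (varSpan_mono hIco_Iic hu_mem)
      apply hnotE
      have hmem : (none : Option ↥F) ∈
          {of : Option ↥F | (Option.elim of [] Subtype.val) ++ cw (fun i => (lin.idxFun i).getD ⟨a, ha⟩) ∈ E} := by
        rw [hGc ⟨a, ha⟩]; exact hof
      rw [hsub a ha]
      simpa using hmem
    | some f =>
      obtain ⟨v, hv, hveq⟩ := constSpan_append_varSpan (I := Set.Iio p)
        (J := Set.Ico p (p + n)) (fun i hi j hj => lt_of_lt_of_le hi hj.1)
        (hF f f.2) hu_mem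
      have hsubset : Set.Iio p ∪ Set.Ico p (p + n) ⊆ Set.Iic (p + n) := by
        rintro x (hx | hx)
        · exact le_of_lt (lt_of_lt_of_le hx (Nat.le_add_right _ _))
        · exact le_of_lt hx.2
      obtain ⟨a, ha, hnotE⟩ := H (p + n) v (varSpan_mono hsubset hv)
      apply hnotE
      rw [hveq a]
      have hmem : (some f) ∈
          {of : Option ↥F | (Option.elim of [] Subtype.val) ++ cw (fun i => (lin.idxFun i).getD ⟨a, ha⟩) ∈ E} := by
        rw [hGc ⟨a, ha⟩]; exact hof
      rw [hsub a ha]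
      simpa using hmem

end HJ


open HJ in
/-- A large set contains a full substitution instance set `{w(a) : a ∈ A}` of
some variable word in the span of an initial segment. -/
theorem stmt5 {α : Type*} (A : Finset α) (hA : A.Nonempty)
    (E : Set (List α)) (hE : E ⊆ WordsOver (A : Set α))
    (s : ℕ → List (Option α)) (hs : ∀ n, IsVarWord (A : Set α) (s n))
    (hlarge : IsLarge (fun _ => (A : Set α)) E s) :
    ∃ (m : ℕ) (w : List (Option α)),
      w ∈ varSpan (fun _ => (A : Set α)) s (Set.Iic m) ∧
      ∀ a ∈ A, substC w a ∈ E := by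
  classical
  by_contra hcon
  push_neg at hcon
  have H : ∀ (m : ℕ) (v : List (Option α)),
      v ∈ varSpan (fun _ => (A : Set α)) s (Set.Iic m) → ∃ a ∈ A, substC v a ∉ E := by
    intro m v hv
    exact hcon m v hv
  choose q u hq hkey using key_lemma A hA E s hs H
  let step : ℕ × Finset (List α) → ℕ × Finset (List α) := fun pF =>
    (q pF.1 pF.2, pF.2 ∪ ((insert [] pF.2) ×ˢ A).image
      (fun pr => pr.1 ++ substC (u pF.1 pF.2) pr.2))
  let G : ℕ → ℕ × Finset (List α) := fun n => Nat.rec (0, ∅) (fun _ IH => step IH) n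
  let m : ℕ → ℕ := fun n => (G n).1
  let Fs : ℕ → Finset (List α) := fun n => (G n).2
  let w : ℕ → List (Option α) := fun n => u (m n) (Fs n)
  have hm0 : m 0 = 0 := rfl
  have hmS : ∀ n, m (n + 1) = q (m n) (Fs n) := fun n => rfl
  have hFs0 : Fs 0 = ∅ := rfl
  have hFsS : ∀ n, Fs (n + 1) = Fs n ∪ ((insert [] (Fs n)) ×ˢ A).image
      (fun pr => pr.1 ++ substC (w n) pr.2) := fun n => rfl
  have hmono : StrictMono m :=
    strictMono_nat_of_lt_succ (fun n => by rw [hmS]; exact hq (m n) (Fs n))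
  -- invariant
  have inv : ∀ n, ∀ f ∈ Fs n, f ∈ constSpan (fun _ => (A : Set α)) s (Set.Iio (m n)) ∧ f ∉ E := by
    intro n
    induction n with
    | zero => intro f hf; rw [hFs0] at hf; exact absurd hf (Finset.notMem_empty f)
    | succ n ih =>
      have hpre : ∀ f ∈ Fs n, f ∈ constSpan (fun _ => (A : Set α)) s (Set.Iio (m n)) :=
        fun f hf => (ih f hf).1
      have hk := hkey (m n) (Fs n) hpre
      have hIsub : Set.Iio (m n) ⊆ Set.Iio (m (n + 1)) :=
        fun x hx => lt_trans hx (hmono (Nat.lt_succ_self n))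
      have hIsub2 : Set.Iio (m n) ∪ Set.Ico (m n) (m (n + 1)) ⊆ Set.Iio (m (n + 1)) := by
        rintro x (hx | hx)
        · exact hIsub hx
        · exact hx.2
      have hIco : Set.Ico (m n) (m (n + 1)) ⊆ Set.Iio (m (n + 1)) := fun x hx => hx.2
      intro f hf
      rw [hFsS n] at hf
      rcases Finset.mem_union.1 hf with hf | hf
      · exact ⟨constSpan_mono hIsub (ih f hf).1, (ih f hf).2⟩
      · obtain ⟨⟨g, a⟩, hmem, rfl⟩ := Finset.mem_image.1 hf
        obtain ⟨hg, ha⟩ := Finset.mem_product.1 hmem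
        have haA : a ∈ (A : Set α) := ha
        have hsubC : substC (w n) a ∈ constSpan (fun _ => (A : Set α)) s
            (Set.Ico (m n) (m (n + 1))) := substC_mem_constSpan hk.1 haA
        rcases Finset.mem_insert.1 hg with rfl | hg
        · refine ⟨?_, ?_⟩
          · simpa using constSpan_mono hIco hsubC
          · simpa using ((hk.2 a ha).1)
        · refine ⟨?_, (hk.2 a ha).2 g hg⟩
          exact constSpan_mono hIsub2
            (constSpan_append (fun i hi j hj => lt_of_lt_of_le hi hj.1) (hpre g hg) hsubC)
  have hwmem : ∀ n, w n ∈ varSpan (fun _ => (A : Set α)) s (Set.Ico (m n) (m (n + 1))) :=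
    fun n => (hkey (m n) (Fs n) (fun f hf => (inv n f hf).1)).1
  have FsMono : Monotone Fs :=
    monotone_nat_of_le_succ (fun n => by rw [hFsS]; exact Finset.subset_union_left)
  -- constant span of w is contained in the Fs's
  have CS : ∀ (k : ℕ) (l : Fin (k + 1) → ℕ) (a : Fin (k + 1) → α), StrictMono l →
      (∀ i, a i ∈ A) →
      (List.ofFn fun i => substC (w (l i)) (a i)).flatten ∈ Fs (l (Fin.last k) + 1) := by
    intro k
    induction k with
    | zero =>
      intro l a _ ha
      have heq : (List.ofFn fun i : Fin 1 => substC (w (l i)) (a i)).flatten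
          = [] ++ substC (w (l (Fin.last 0))) (a (Fin.last 0)) := by
        have h1 : (List.ofFn fun i : Fin 1 => substC (w (l i)) (a i))
            = [substC (w (l (Fin.last 0))) (a (Fin.last 0))] := by
          rw [List.ofFn_succ, List.ofFn_zero]
          rfl
        rw [h1, List.flatten_cons, List.flatten_nil, List.append_nil, List.nil_append]
      rw [heq, hFsS (l (Fin.last 0))]
      refine Finset.mem_union_right _ (Finset.mem_image.2
        ⟨([], a (Fin.last 0)), Finset.mem_product.2 ⟨Finset.mem_insert_self _ _, ha _⟩, rfl⟩)
    | succ k ih =>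
      intro l a hl ha
      have hsplit : (List.ofFn fun i : Fin (k + 2) => substC (w (l i)) (a i)).flatten
          = (List.ofFn fun i : Fin (k + 1) =>
              substC (w (l i.castSucc)) (a i.castSucc)).flatten
            ++ substC (w (l (Fin.last (k + 1)))) (a (Fin.last (k + 1))) := by
        rw [List.ofFn_succ' (fun i : Fin (k + 2) => substC (w (l i)) (a i))]
        rw [List.concat_eq_append, List.flatten_append, List.flatten_cons,
          List.flatten_nil, List.append_nil]
      have hfront := ih (fun i => l i.castSucc) (fun i => a i.castSucc)
        (fun i j hij => hl (Fin.castSucc_lt_castSucc_iff.2 hij)) (fun i => ha _)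
      have hlt : l ((Fin.last k).castSucc) + 1 ≤ l (Fin.last (k + 1)) :=
        hl (Fin.castSucc_lt_last _)
      have hfront' : (List.ofFn fun i : Fin (k + 1) =>
          substC (w (l i.castSucc)) (a i.castSucc)).flatten ∈ Fs (l (Fin.last (k + 1))) :=
        FsMono hlt hfront
      rw [hsplit, hFsS (l (Fin.last (k + 1)))]
      refine Finset.mem_union_right _ (Finset.mem_image.2
        ⟨((List.ofFn fun i : Fin (k + 1) => substC (w (l i.castSucc)) (a i.castSucc)).flatten,
          a (Fin.last (k + 1))),
         Finset.mem_product.2 ⟨Finset.mem_insert_of_mem hfront', ha _⟩, rfl⟩)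
  -- w is extracted, contradict largeness
  have hext : Extracted (fun _ => (A : Set α)) s w :=
    fun l => ⟨m, hm0, hmono, fun i _ => hwmem i⟩
  obtain ⟨e, heE, hespan⟩ := hlarge w hext
  obtain ⟨k, l, a, hl, -, haA, rfl⟩ := hespan
  have hmemFs := CS k l a hl (fun i => haA i)
  exact (inv (l (Fin.last k) + 1) _ hmemFs).2 heE
end

section
/- Let A be a finite nonempty alphabet, E ⊆ W(A), and 𝐬 = (s_n(x))_{n=0}^∞ an infinite sequence of variable words over A such that E is large in 𝐬. Then there exist m ≥ 1, a variable word w(x) ∈ ⟨(s_n(x))_{n=0}^{m-1}⟩_v, and an infinite extracted subsequence 𝐭 of (s_n(x))_{n=m}^∞ such that, setting F = {w(a) : a ∈ A}, the set E ∩ E_F is large in 𝐭. -/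
namespace HJProof
open HJ

variable {α : Type*}

/-! ### substitution algebra -/

theorem substV_none (u : List (Option α)) : substV u none = u := by
  have : (fun c : Option α => Option.elim c none some) = id := funext fun c => by cases c <;> rfl
  simp [substV, this]

theorem substV_substV (u : List (Option α)) (b c : Option α) :
    substV (substV u b) c = substV u (Option.elim b c some) := by
  simp only [substV, List.map_map]
  congr 1
  funext d; cases d <;> cases b <;> rfl

theorem substC_substV (u : List (Option α)) (b : Option α) (a : α) :
    substC (substV u b) a = substC u (b.getD a) := by
  simp only [substC, substV, List.map_map]
  congr 1
  funext d; cases d <;> cases b <;> rfl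

theorem substV_some (u : List (Option α)) (a : α) :
    substV u (some a) = (substC u a).map some := by
  simp only [substC, substV, List.map_map]
  congr 1
  funext d; cases d <;> rfl

theorem substC_map_some (w : List α) (a : α) : substC (w.map some) a = w := by
  simp [substC, List.map_map, Function.comp_def]

theorem substC_append (u v : List (Option α)) (a : α) :
    substC (u ++ v) a = substC u a ++ substC v a := by simp [substC]

theorem substV_append (u v : List (Option α)) (b : Option α) :
    substV (u ++ v) b = substV u b ++ substV v b := by simp [substV]

theorem none_mem_substV_self (u : List (Option α)) (h : none ∈ u) :
    none ∈ substV u none := by rw [substV_none]; exact h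

/-! ### list normal forms for spans -/

def PC (s : ℕ → List (Option α)) (L : List (ℕ × α)) : List α :=
  (L.map fun p => substC (s p.1) p.2).flatten

def PV (s : ℕ → List (Option α)) (L : List (ℕ × Option α)) : List (Option α) :=
  (L.map fun p => substV (s p.1) p.2).flatten

theorem PC_append (s : ℕ → List (Option α)) (L₁ L₂ : List (ℕ × α)) :
    PC s (L₁ ++ L₂) = PC s L₁ ++ PC s L₂ := by simp [PC]

theorem PV_append (s : ℕ → List (Option α)) (L₁ L₂ : List (ℕ × Option α)) :
    PV s (L₁ ++ L₂) = PV s L₁ ++ PV s L₂ := by simp [PV]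

/-- generic list form for span-like sets -/
theorem span_list_form {β γ : Type*} (g : ℕ → β → List γ) (P : ℕ → β → Prop)
    (I : Set ℕ) (w : List γ) :
    (∃ (n : ℕ) (l : Fin (n + 1) → ℕ) (b : Fin (n + 1) → β),
        StrictMono l ∧ (∀ i, l i ∈ I) ∧ (∀ i, P (l i) (b i)) ∧
        w = (List.ofFn fun i => g (l i) (b i)).flatten) ↔
    (∃ L : List (ℕ × β), L ≠ [] ∧ (L.map Prod.fst).Pairwise (· < ·) ∧
        (∀ p ∈ L, p.1 ∈ I ∧ P p.1 p.2) ∧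
        w = (L.map fun p => g p.1 p.2).flatten) := by
  constructor
  · rintro ⟨n, l, b, hmono, hI, hP, rfl⟩
    refine ⟨List.ofFn (fun i => (l i, b i)), by simp, ?_, ?_, ?_⟩
    · rw [List.map_ofFn]
      exact List.pairwise_ofFn.2 fun i j h => hmono h
    · intro p hp
      rw [List.mem_ofFn] at hp
      obtain ⟨i, rfl⟩ := hp
      exact ⟨hI i, hP i⟩
    · rw [List.map_ofFn]; rfl
  · rintro ⟨L, hne, hpw, hmem, rfl⟩
    obtain ⟨n, hn⟩ : ∃ n, L.length = n + 1 :=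
      ⟨L.length - 1, (Nat.succ_pred_eq_of_pos (List.length_pos_iff.2 hne)).symm⟩
    have hlt : ∀ i : Fin (n + 1), (i : ℕ) < L.length := fun i => by omega
    refine ⟨n, fun i => (L[(i : ℕ)]'(hlt i)).1, fun i => (L[(i : ℕ)]'(hlt i)).2, ?_, ?_, ?_, ?_⟩
    · intro i j hij
      have := List.pairwise_iff_getElem.1 hpw (i : ℕ) (j : ℕ)
        (by simpa using hlt i) (by simpa using hlt j) hij
      simpa using this
    · intro i
      exact (hmem _ (L.getElem_mem (hlt i))).1
    · intro i
      exact (hmem _ (L.getElem_mem (hlt i))).2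
    · have : List.ofFn (fun i : Fin (n+1) => g (L[(i : ℕ)]'(hlt i)).1 (L[(i:ℕ)]'(hlt i)).2)
          = L.map fun p => g p.1 p.2 := by
        rw [← List.ofFn_getElem_eq_map L (fun p => g p.1 p.2)]
        exact (List.ofFn_congr hn (fun i : Fin L.length => g (L[(i : ℕ)]).1 (L[(i : ℕ)]).2)).symm
      rw [this]

theorem mem_constSpan_iff {A : Set α} {s : ℕ → List (Option α)} {I : Set ℕ} {w : List α} :
    w ∈ constSpan (fun _ => A) s I ↔
      ∃ L : List (ℕ × α), L ≠ [] ∧ (L.map Prod.fst).Pairwise (· < ·) ∧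
        (∀ p ∈ L, p.1 ∈ I ∧ p.2 ∈ A) ∧ w = PC s L := by
  exact span_list_form (fun l a => substC (s l) a) (fun _ a => a ∈ A) I w

theorem mem_varSpan_iff {A : Set α} {s : ℕ → List (Option α)} {I : Set ℕ}
    {w : List (Option α)} :
    w ∈ varSpan (fun _ => A) s I ↔
      (none ∈ w ∧ ∃ L : List (ℕ × Option α), L ≠ [] ∧ (L.map Prod.fst).Pairwise (· < ·) ∧
        (∀ p ∈ L, p.1 ∈ I ∧ ∀ a, p.2 = some a → a ∈ A) ∧ w = PV s L) := by
  constructor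
  · rintro ⟨n, l, b, hmono, hI, hb, hnone, rfl⟩
    refine ⟨hnone, ?_⟩
    exact (span_list_form (fun l b => substV (s l) b) (fun _ b => ∀ a, b = some a → a ∈ A)
      I _).1 ⟨n, l, b, hmono, hI, hb, rfl⟩
  · rintro ⟨hnone, hL⟩
    obtain ⟨n, l, b, hmono, hI, hb, hw⟩ :=
      (span_list_form (fun l b => substV (s l) b) (fun _ b => ∀ a, b = some a → a ∈ A)
      I w).2 hL
    exact ⟨n, l, b, hmono, hI, hb, hnone, hw⟩

end HJProof

namespace HJProof
open HJ

variable {α : Type*}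

theorem substC_flatten (M : List (List (Option α))) (a : α) :
    substC M.flatten a = (M.map (substC · a)).flatten := by
  simp [substC, List.map_flatten]

theorem substV_flatten (M : List (List (Option α))) (b : Option α) :
    substV M.flatten b = (M.map (substV · b)).flatten := by
  simp [substV, List.map_flatten]

theorem substC_PV (s : ℕ → List (Option α)) (L : List (ℕ × Option α)) (a : α) :
    substC (PV s L) a = PC s (L.map fun p => (p.1, p.2.getD a)) := by
  rw [PV, substC_flatten, PC]
  simp [List.map_map, Function.comp_def, substC_substV]

theorem substV_PV (s : ℕ → List (Option α)) (L : List (ℕ × Option α)) (b : Option α) :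
    substV (PV s L) b = PV s (L.map fun p => (p.1, p.2.elim b some)) := by
  rw [PV, substV_flatten, PV]
  simp [List.map_map, Function.comp_def, substV_substV]

theorem map_some_PC (s : ℕ → List (Option α)) (L : List (ℕ × α)) :
    (PC s L).map some = PV s (L.map fun p => (p.1, some p.2)) := by
  rw [PC, PV, List.map_flatten]
  simp [List.map_map, Function.comp_def, substV_some]

theorem varSpan_mono {A : Set α} {s : ℕ → List (Option α)} {I J : Set ℕ} (h : I ⊆ J) :
    varSpan (fun _ => A) s I ⊆ varSpan (fun _ => A) s J := by
  rintro w ⟨n, l, b, hmono, hI, hb, hnone, rfl⟩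
  exact ⟨n, l, b, hmono, fun i => h (hI i), hb, hnone, rfl⟩

theorem constSpan_mono {A : Set α} {s : ℕ → List (Option α)} {I J : Set ℕ} (h : I ⊆ J) :
    constSpan (fun _ => A) s I ⊆ constSpan (fun _ => A) s J := by
  rintro w ⟨n, l, b, hmono, hI, hb, rfl⟩
  exact ⟨n, l, b, hmono, fun i => h (hI i), hb, rfl⟩

theorem constSpan_congr {A : Set α} {s t : ℕ → List (Option α)} {I : Set ℕ}
    (h : ∀ i ∈ I, s i = t i) :
    constSpan (fun _ => A) s I ⊆ constSpan (fun _ => A) t I := by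
  rintro w ⟨n, l, b, hmono, hI, hb, rfl⟩
  refine ⟨n, l, b, hmono, hI, hb, ?_⟩
  have he : ∀ i, s (l i) = t (l i) := fun i => h (l i) (hI i)
  simp only [he]

/-- a `constSpan` element only uses finitely many indices -/
theorem constSpan_univ_bounded {A : Set α} {s : ℕ → List (Option α)} {w : List α}
    (h : w ∈ constSpan (fun _ => A) s Set.univ) :
    ∃ n, w ∈ constSpan (fun _ => A) s (Set.Iio n) := by
  obtain ⟨n, l, b, hmono, -, hb, rfl⟩ := h
  refine ⟨l (Fin.last n) + 1, n, l, b, hmono, fun i => ?_, hb, rfl⟩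
  have : l i ≤ l (Fin.last n) := hmono.monotone (Fin.le_last i)
  simpa [Set.mem_Iio] using Nat.lt_succ_of_le this

/-- membership of a noneptmy Ico-span forces the interval nonempty -/
theorem varSpan_Ico_lt {A : Set α} {s : ℕ → List (Option α)} {c d : ℕ}
    {w : List (Option α)} (h : w ∈ varSpan (fun _ => A) s (Set.Ico c d)) : c < d := by
  obtain ⟨n, l, b, hmono, hI, -⟩ := h
  have := hI 0
  simp only [Set.mem_Ico] at this
  omega

theorem varSpan_shift {A : Set α} {s : ℕ → List (Option α)} {m c d : ℕ} (hc : m ≤ c)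
    {w : List (Option α)} (h : w ∈ varSpan (fun _ => A) s (Set.Ico c d)) :
    w ∈ varSpan (fun _ => A) (fun n => s (m + n)) (Set.Ico (c - m) (d - m)) := by
  obtain ⟨n, l, b, hmono, hI, hb, hnone, rfl⟩ := h
  have hml : ∀ i, m ≤ l i := fun i => hc.trans (hI i).1
  refine ⟨n, fun i => l i - m, b, ?_, ?_, hb, hnone, ?_⟩
  · intro i j hij
    exact Nat.sub_lt_sub_right (hml i) (hmono hij)
  · intro i
    exact ⟨Nat.sub_le_sub_right (hI i).1 m, Nat.sub_lt_sub_right (hml i) (hI i).2⟩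
  · have : ∀ i, m + (l i - m) = l i := fun i => Nat.add_sub_cancel' (hml i)
    simp only [this]

/-! ### composition of spans -/

theorem constSpan_comp {A : Set α} {s t : ℕ → List (Option α)} {μ : ℕ → ℕ}
    (hμ : Monotone μ) {n₁ n₂ : ℕ}
    (ht : ∀ i ∈ Set.Ico n₁ n₂, t i ∈ varSpan (fun _ => A) s (Set.Ico (μ i) (μ (i + 1)))) :
    constSpan (fun _ => A) t (Set.Ico n₁ n₂) ⊆
      constSpan (fun _ => A) s (Set.Ico (μ n₁) (μ n₂)) := by
  intro w hw
  rw [mem_constSpan_iff] at hw ⊢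
  obtain ⟨L, hne, hpw, hmem, rfl⟩ := hw
  have hch : ∀ i, ∃ K : List (ℕ × Option α), i ∈ Set.Ico n₁ n₂ →
      (K ≠ [] ∧ (K.map Prod.fst).Pairwise (· < ·) ∧
        (∀ q ∈ K, q.1 ∈ Set.Ico (μ i) (μ (i + 1)) ∧ ∀ a, q.2 = some a → a ∈ A) ∧
        t i = PV s K) := by
    intro i
    by_cases h : i ∈ Set.Ico n₁ n₂
    · obtain ⟨hnone, K, h1, h2, h3, h4⟩ := mem_varSpan_iff.1 (ht i h)
      exact ⟨K, fun _ => ⟨h1, h2, h3, h4⟩⟩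
    · exact ⟨[], fun h' => absurd h' h⟩
  choose K hK using hch
  refine ⟨L.flatMap (fun p => (K p.1).map fun q => (q.1, q.2.getD p.2)), ?_, ?_, ?_, ?_⟩
  · cases L with
    | nil => exact absurd rfl hne
    | cons p L' =>
      have h1 := hK p.1 (hmem p (List.mem_cons_self (a := p) (l := L'))).1
      simp only [List.flatMap_cons]
      exact List.append_ne_nil_of_left_ne_nil (by simpa using h1.1) _
  · rw [List.map_flatMap]
    rw [List.pairwise_flatMap]
    constructor
    · intro p hp
      have h1 := hK p.1 (hmem p hp).1
      simpa [List.map_map, Function.comp_def] using h1.2.1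
    · have hLpw : L.Pairwise (fun p p' => p.1 < p'.1) := (List.pairwise_map.1 hpw)
      refine hLpw.imp_of_mem ?_
      intro p p' hp hp' hlt x hx y hy
      simp only [List.map_map, List.mem_map, Function.comp_def] at hx hy
      obtain ⟨q, hq, rfl⟩ := hx
      obtain ⟨q', hq', rfl⟩ := hy
      have h1 := ((hK p.1 (hmem p hp).1).2.2.1 q hq).1
      have h2 := ((hK p'.1 (hmem p' hp').1).2.2.1 q' hq').1
      have : μ (p.1 + 1) ≤ μ p'.1 := hμ hlt
      simp only [Set.mem_Ico] at h1 h2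
      omega
  · intro q' hq'
    simp only [List.mem_flatMap, List.mem_map] at hq'
    obtain ⟨p, hp, q, hq, rfl⟩ := hq'
    have h1 := (hK p.1 (hmem p hp).1).2.2.1 q hq
    have hpi := hmem p hp
    simp only [Set.mem_Ico] at h1 hpi ⊢
    constructor
    · constructor
      · exact le_trans (hμ hpi.1.1) h1.1.1
      · exact lt_of_lt_of_le h1.1.2 (hμ hpi.1.2)
    · cases hq2 : q.2 with
      | some a =>
        simp only [hq2, Option.getD_some]
        exact h1.2 a hq2
      | none =>
        simp only [hq2, Option.getD_none]
        exact hpi.2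
  · -- flatten equality
    clear hpw hne
    induction L with
    | nil => rfl
    | cons p L' ih =>
      have h1 := hK p.1 (hmem p (List.mem_cons_self (a := p) (l := L'))).1
      have : PC t (p :: L') = substC (t p.1) p.2 ++ PC t L' := by simp [PC]
      rw [this, List.flatMap_cons, PC_append,
        ih (fun q hq => hmem q (List.mem_cons_of_mem p hq))]
      congr 1
      rw [h1.2.2.2, substC_PV]

theorem varSpan_comp {A : Set α} {s t : ℕ → List (Option α)} {μ : ℕ → ℕ}
    (hμ : Monotone μ) {n₁ n₂ : ℕ}
    (ht : ∀ i ∈ Set.Ico n₁ n₂, t i ∈ varSpan (fun _ => A) s (Set.Ico (μ i) (μ (i + 1)))) :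
    varSpan (fun _ => A) t (Set.Ico n₁ n₂) ⊆
      varSpan (fun _ => A) s (Set.Ico (μ n₁) (μ n₂)) := by
  intro w hw
  rw [mem_varSpan_iff] at hw ⊢
  obtain ⟨hnone, L, hne, hpw, hmem, rfl⟩ := hw
  refine ⟨hnone, ?_⟩
  have hch : ∀ i, ∃ K : List (ℕ × Option α), i ∈ Set.Ico n₁ n₂ →
      (K ≠ [] ∧ (K.map Prod.fst).Pairwise (· < ·) ∧
        (∀ q ∈ K, q.1 ∈ Set.Ico (μ i) (μ (i + 1)) ∧ ∀ a, q.2 = some a → a ∈ A) ∧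
        t i = PV s K) := by
    intro i
    by_cases h : i ∈ Set.Ico n₁ n₂
    · obtain ⟨hnone', K, h1, h2, h3, h4⟩ := mem_varSpan_iff.1 (ht i h)
      exact ⟨K, fun _ => ⟨h1, h2, h3, h4⟩⟩
    · exact ⟨[], fun h' => absurd h' h⟩
  choose K hK using hch
  refine ⟨L.flatMap (fun p => (K p.1).map fun q => (q.1, q.2.elim p.2 some)), ?_, ?_, ?_, ?_⟩
  · cases L with
    | nil => exact absurd rfl hne
    | cons p L' =>
      have h1 := hK p.1 (hmem p (List.mem_cons_self (a := p) (l := L'))).1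
      simp only [List.flatMap_cons]
      exact List.append_ne_nil_of_left_ne_nil (by simpa using h1.1) _
  · rw [List.map_flatMap]
    rw [List.pairwise_flatMap]
    constructor
    · intro p hp
      have h1 := hK p.1 (hmem p hp).1
      simpa [List.map_map, Function.comp_def] using h1.2.1
    · have hLpw : L.Pairwise (fun p p' => p.1 < p'.1) := (List.pairwise_map.1 hpw)
      refine hLpw.imp_of_mem ?_
      intro p p' hp hp' hlt x hx y hy
      simp only [List.map_map, List.mem_map, Function.comp_def] at hx hy
      obtain ⟨q, hq, rfl⟩ := hx
      obtain ⟨q', hq', rfl⟩ := hy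
      have h1 := ((hK p.1 (hmem p hp).1).2.2.1 q hq).1
      have h2 := ((hK p'.1 (hmem p' hp').1).2.2.1 q' hq').1
      have : μ (p.1 + 1) ≤ μ p'.1 := hμ hlt
      simp only [Set.mem_Ico] at h1 h2
      omega
  · intro q' hq'
    simp only [List.mem_flatMap, List.mem_map] at hq'
    obtain ⟨p, hp, q, hq, rfl⟩ := hq'
    have h1 := (hK p.1 (hmem p hp).1).2.2.1 q hq
    have hpi := hmem p hp
    simp only [Set.mem_Ico] at h1 hpi ⊢
    constructor
    · constructor
      · exact le_trans (hμ hpi.1.1) h1.1.1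
      · exact lt_of_lt_of_le h1.1.2 (hμ hpi.1.2)
    · intro a ha
      cases hq2 : q.2 with
      | some a' =>
        rw [hq2] at ha
        simp only [Option.elim_some, Option.some_inj] at ha
        exact ha ▸ h1.2 a' hq2
      | none =>
        rw [hq2] at ha
        simp only [Option.elim_none] at ha
        exact hpi.2 a ha
  · clear hpw hne hnone
    induction L with
    | nil => rfl
    | cons p L' ih =>
      have h1 := hK p.1 (hmem p (List.mem_cons_self (a := p) (l := L'))).1
      have : PV t (p :: L') = substV (t p.1) p.2 ++ PV t L' := by simp [PV]
      rw [this, List.flatMap_cons, PV_append,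
        ih (fun q hq => hmem q (List.mem_cons_of_mem p hq))]
      congr 1
      rw [h1.2.2.2, substV_PV]

/-! ### appending spans -/

theorem append_const_var {A : Set α} {s : ℕ → List (Option α)} {I₁ I₂ : Set ℕ}
    (hlt : ∀ p ∈ I₁, ∀ q ∈ I₂, p < q) {w₁ : List α} {w₂ : List (Option α)}
    (h₁ : w₁ ∈ constSpan (fun _ => A) s I₁) (h₂ : w₂ ∈ varSpan (fun _ => A) s I₂) :
    (w₁.map some) ++ w₂ ∈ varSpan (fun _ => A) s (I₁ ∪ I₂) := by
  rw [mem_constSpan_iff] at h₁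
  rw [mem_varSpan_iff] at h₂ ⊢
  obtain ⟨L₁, hne₁, hpw₁, hmem₁, rfl⟩ := h₁
  obtain ⟨hnone, L₂, hne₂, hpw₂, hmem₂, rfl⟩ := h₂
  refine ⟨by simp [hnone], (L₁.map fun p => (p.1, some p.2)) ++ L₂, by simp [hne₁], ?_, ?_, ?_⟩
  · rw [List.map_append, List.pairwise_append]
    refine ⟨by simpa [List.map_map, Function.comp_def] using hpw₁, hpw₂, ?_⟩
    intro x hx y hy
    simp only [List.map_map, List.mem_map, Function.comp_def] at hx hy
    obtain ⟨p, hp, rfl⟩ := hx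
    obtain ⟨q, hq, rfl⟩ := hy
    exact hlt _ (hmem₁ p hp).1 _ (hmem₂ q hq).1
  · intro p hp
    rcases List.mem_append.1 hp with hp | hp
    · simp only [List.mem_map] at hp
      obtain ⟨q, hq, rfl⟩ := hp
      refine ⟨Or.inl (hmem₁ q hq).1, ?_⟩
      intro a ha
      simp only [Option.some_inj] at ha
      exact ha ▸ (hmem₁ q hq).2
    · exact ⟨Or.inr (hmem₂ p hp).1, (hmem₂ p hp).2⟩
  · rw [PV_append, map_some_PC]

theorem append_var_const {A : Set α} {s : ℕ → List (Option α)} {I₁ I₂ : Set ℕ}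
    (hlt : ∀ p ∈ I₁, ∀ q ∈ I₂, p < q) {w₁ : List (Option α)} {w₂ : List α}
    (h₁ : w₁ ∈ varSpan (fun _ => A) s I₁) (h₂ : w₂ ∈ constSpan (fun _ => A) s I₂) :
    w₁ ++ (w₂.map some) ∈ varSpan (fun _ => A) s (I₁ ∪ I₂) := by
  rw [mem_constSpan_iff] at h₂
  rw [mem_varSpan_iff] at h₁ ⊢
  obtain ⟨hnone, L₁, hne₁, hpw₁, hmem₁, rfl⟩ := h₁
  obtain ⟨L₂, hne₂, hpw₂, hmem₂, rfl⟩ := h₂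
  refine ⟨by simp [hnone], L₁ ++ (L₂.map fun p => (p.1, some p.2)), by simp [hne₁], ?_, ?_, ?_⟩
  · rw [List.map_append, List.pairwise_append]
    refine ⟨hpw₁, by simpa [List.map_map, Function.comp_def] using hpw₂, ?_⟩
    intro x hx y hy
    simp only [List.map_map, List.mem_map, Function.comp_def] at hx hy
    obtain ⟨p, hp, rfl⟩ := hx
    obtain ⟨q, hq, rfl⟩ := hy
    exact hlt _ (hmem₁ p hp).1 _ (hmem₂ q hq).1
  · intro p hp
    rcases List.mem_append.1 hp with hp | hp
    · exact ⟨Or.inl (hmem₁ p hp).1, (hmem₁ p hp).2⟩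
    · simp only [List.mem_map] at hp
      obtain ⟨q, hq, rfl⟩ := hp
      refine ⟨Or.inr (hmem₂ q hq).1, ?_⟩
      intro a ha
      simp only [Option.some_inj] at ha
      exact ha ▸ (hmem₂ q hq).2
  · rw [PV_append, map_some_PC]

end HJProof

namespace HJProof
open HJ

variable {α : Type*}

theorem Iio_eq_Ico (n : ℕ) : Set.Iio n = Set.Ico 0 n := by
  ext i; simp

theorem strictMono_fin_one {f : Fin 1 → ℕ} : StrictMono f := by
  intro i j hij
  rw [Subsingleton.elim i j] at hij
  exact absurd hij (lt_irrefl j)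

theorem varSpan_single {A : Set α} {s : ℕ → List (Option α)} {I : Set ℕ} {k : ℕ}
    (hk : k ∈ I) (hnone : none ∈ s k) : s k ∈ varSpan (fun _ => A) s I := by
  refine ⟨0, fun _ => k, fun _ => none, strictMono_fin_one, fun _ => hk, by simp, hnone, ?_⟩
  simp [substV_none]

theorem none_mem_of_extracted {A : Set α} {s t : ℕ → List (Option α)}
    (h : Extracted (fun _ => A) s t) (i : ℕ) : none ∈ t i := by
  obtain ⟨m, -, -, hm⟩ := h i
  obtain ⟨n, l, b, -, -, -, hnone, -⟩ := hm i le_rfl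
  exact hnone

theorem extracted_offset {A : Set α} {u : ℕ → List (Option α)}
    (hnone : ∀ i, none ∈ u i) (c : ℕ) :
    Extracted (fun _ => A) u (fun k => u (c + k)) := by
  intro l
  refine ⟨fun i => if i = 0 then 0 else c + i, rfl, ?_, ?_⟩
  · intro i j hij
    dsimp only
    split <;> split <;> omega
  · intro i _
    refine varSpan_single ?_ (hnone _)
    have h2 : (if i + 1 = 0 then 0 else c + (i + 1)) = c + (i + 1) := if_neg (by omega)
    dsimp only
    rw [h2, Set.mem_Ico]
    split <;> omega

theorem extracted_refl {A : Set α} {u : ℕ → List (Option α)}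
    (hnone : ∀ i, none ∈ u i) : Extracted (fun _ => A) u u := by
  have := extracted_offset (A := A) hnone 0
  simpa using this

theorem extracted_trans {A : Set α} {s u w : ℕ → List (Option α)}
    (h1 : Extracted (fun _ => A) s u) (h2 : Extracted (fun _ => A) u w) :
    Extracted (fun _ => A) s w := by
  intro l
  obtain ⟨m, hm0, hmono, hmem⟩ := h2 l
  obtain ⟨m', hm'0, hmono', hmem'⟩ := h1 (m (l + 1))
  refine ⟨m' ∘ m, by simp [hm0, hm'0], hmono'.comp hmono, ?_⟩
  intro i hi
  refine varSpan_comp (μ := m') hmono'.monotone ?_ (hmem i hi)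
  intro k hk
  refine hmem' k ?_
  have h3 : m (i + 1) ≤ m (l + 1) := hmono.monotone (by omega)
  simp only [Set.mem_Ico] at hk
  omega

theorem isLarge_mono_set {A : Set α} {E E' : Set (List α)} {u : ℕ → List (Option α)}
    (h : E ⊆ E') (hl : IsLarge (fun _ => A) E u) : IsLarge (fun _ => A) E' u :=
  fun w hw => ((hl w hw).imp fun z hz => ⟨h hz.1, hz.2⟩)

theorem isLarge_of_extracted {A : Set α} {E : Set (List α)} {s u : ℕ → List (Option α)}
    (hl : IsLarge (fun _ => A) E s) (h : Extracted (fun _ => A) s u) :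
    IsLarge (fun _ => A) E u :=
  fun w hw => hl w (extracted_trans h hw)

theorem constSpan_univ_subset_of_extracted {A : Set α} {w u : ℕ → List (Option α)}
    (h : Extracted (fun _ => A) u w) :
    constSpan (fun _ => A) w Set.univ ⊆ constSpan (fun _ => A) u Set.univ := by
  intro z hz
  obtain ⟨nb, hb⟩ := constSpan_univ_bounded hz
  rw [Iio_eq_Ico] at hb
  obtain ⟨m, hm0, hmono, hmem⟩ := h nb
  have h2 := constSpan_comp (μ := m) hmono.monotone
    (fun i hi => hmem i (by simp only [Set.mem_Ico] at hi; omega)) hb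
  exact constSpan_mono (Set.subset_univ _) h2

theorem not_isLarge {A : Set α} {E : Set (List α)} {u : ℕ → List (Option α)}
    (h : ¬ IsLarge (fun _ => A) E u) :
    ∃ w, Extracted (fun _ => A) u w ∧ E ∩ constSpan (fun _ => A) w Set.univ = ∅ := by
  unfold IsLarge at h
  push_neg at h
  obtain ⟨w, hw, h⟩ := h
  exact ⟨w, hw, h⟩

theorem partition_aux {A : Set α} {E : Set (List α)} {κ : Type*} (f : List α → κ)
    (S : Finset κ) :
    ∀ u : ℕ → List (Option α), (∀ i, none ∈ u i) →
      IsLarge (fun _ => A) {z | z ∈ E ∧ f z ∈ S} u →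
      ∃ c ∈ S, ∃ t, Extracted (fun _ => A) u t ∧
        IsLarge (fun _ => A) (E ∩ f ⁻¹' {c}) t := by
  classical
  induction S using Finset.induction with
  | empty =>
    intro u hnone hL
    obtain ⟨z, hz, -⟩ := hL u (extracted_refl hnone)
    exact absurd hz.2 (by simp)
  | @insert c S' hcS' ih =>
    intro u hnone hL
    by_cases hc : ∃ t, Extracted (fun _ => A) u t ∧ IsLarge (fun _ => A) (E ∩ f ⁻¹' {c}) t
    · obtain ⟨t, h1, h2⟩ := hc
      exact ⟨c, Finset.mem_insert_self _ _, t, h1, h2⟩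
    · push_neg at hc
      have hnl : ¬ IsLarge (fun _ => A) (E ∩ f ⁻¹' {c}) u :=
        fun h => (hc u (extracted_refl hnone)) h
      obtain ⟨w, hw, hdisj⟩ := not_isLarge hnl
      have hnonew : ∀ i, none ∈ w i := none_mem_of_extracted hw
      have hLw : IsLarge (fun _ => A) {z | z ∈ E ∧ f z ∈ S'} w := by
        intro v hv
        obtain ⟨z, hz1, hz2⟩ := hL v (extracted_trans hw hv)
        refine ⟨z, ⟨hz1.1, ?_⟩, hz2⟩
        have hzw : z ∈ constSpan (fun _ => A) w Set.univ :=
          constSpan_univ_subset_of_extracted hv hz2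
        have hne : f z ≠ c := by
          intro hfc
          have : z ∈ (E ∩ f ⁻¹' {c}) ∩ constSpan (fun _ => A) w Set.univ :=
            ⟨⟨hz1.1, by simp [hfc]⟩, hzw⟩
          rw [hdisj] at this
          exact this
        have := hz1.2
        rw [Finset.mem_insert] at this
        tauto
      obtain ⟨c', hc', t, ht1, ht2⟩ := ih w hnonew hLw
      exact ⟨c', Finset.mem_insert_of_mem hc', t, extracted_trans hw ht1, ht2⟩

theorem partition_lemma {A : Set α} {E : Set (List α)} {κ : Type*} [Fintype κ]
    (f : List α → κ) (u : ℕ → List (Option α)) (hnone : ∀ i, none ∈ u i)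
    (hL : IsLarge (fun _ => A) E u) :
    ∃ (c : κ) (t : ℕ → List (Option α)), Extracted (fun _ => A) u t ∧
      IsLarge (fun _ => A) (E ∩ f ⁻¹' {c}) t := by
  have : {z | z ∈ E ∧ f z ∈ (Finset.univ : Finset κ)} = E := by ext z; simp
  obtain ⟨c, -, t, h1, h2⟩ := partition_aux f Finset.univ u hnone (this ▸ hL)
  exact ⟨c, t, h1, h2⟩

/-! ### block subsequences -/

theorem exists_block_subseq {A : Set α} {s w : ℕ → List (Option α)}
    (hw : Extracted (fun _ => A) s w) :
    ∃ (k : ℕ → ℕ) (ν : ℕ → ℕ), StrictMono k ∧ k 0 = 0 ∧ ν 0 = 0 ∧ StrictMono ν ∧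
      (∀ i, w (k i) ∈ varSpan (fun _ => A) s (Set.Ico (ν i) (ν (i + 1)))) ∧
      Extracted (fun _ => A) w (fun i => w (k i)) := by
  classical
  set mo : ℕ → ℕ → ℕ := fun L => Classical.choose (hw L) with hmo_def
  have hmo : ∀ L, (mo L) 0 = 0 ∧ StrictMono (mo L) ∧
      ∀ i ≤ L, w i ∈ varSpan (fun _ => A) s (Set.Ico (mo L i) (mo L (i + 1))) :=
    fun L => Classical.choose_spec (hw L)
  have hmo_ge : ∀ L i, i ≤ mo L i := by
    intro L i
    induction i with
    | zero => omega
    | succ j ihj =>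
      have := (hmo L).2.1 (show j < j + 1 by omega)
      omega
  set k : ℕ → ℕ := fun n => Nat.rec 0 (fun i ki => max (ki + 1) (mo ki (ki + 1))) n with hk_def
  have hk0 : k 0 = 0 := rfl
  have hksucc : ∀ i, k (i + 1) = max (k i + 1) (mo (k i) (k i + 1)) := fun i => rfl
  have hkmono : StrictMono k := strictMono_nat_of_lt_succ fun i => by
    rw [hksucc]; omega
  set ν : ℕ → ℕ := fun i => Nat.rec 0 (fun j _ => mo (k j) (k j + 1)) i with hν_def
  have hν0 : ν 0 = 0 := rfl
  have hνsucc : ∀ i, ν (i + 1) = mo (k i) (k i + 1) := fun i => rfl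
  have hblock : ∀ i, w (k i) ∈ varSpan (fun _ => A) s (Set.Ico (ν i) (ν (i + 1))) := by
    intro i
    have hmem := (hmo (k i)).2.2 (k i) le_rfl
    refine varSpan_mono ?_ hmem
    rw [hνsucc]
    apply Set.Ico_subset_Ico _ le_rfl
    cases i with
    | zero => rw [hν0]; omega
    | succ j =>
      rw [hνsucc]
      have h1 : mo (k j) (k j + 1) ≤ k (j + 1) := by rw [hksucc]; omega
      have h2 : k (j + 1) ≤ mo (k (j + 1)) (k (j + 1)) := hmo_ge _ _
      omega
  have hνmono : StrictMono ν := strictMono_nat_of_lt_succ fun i => by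
    cases i with
    | zero =>
      rw [hν0, hνsucc, hk0]
      have h1 := (hmo 0).2.1 (show (0:ℕ) < 0 + 1 by omega)
      have h0 := (hmo 0).1
      omega
    | succ j =>
      rw [hνsucc j, hνsucc (j + 1)]
      have h1 : mo (k j) (k j + 1) ≤ k (j + 1) := by rw [hksucc]; omega
      have h2 : k (j + 1) ≤ mo (k (j + 1)) (k (j + 1)) := hmo_ge _ _
      have h3 : mo (k (j + 1)) (k (j + 1)) < mo (k (j + 1)) (k (j + 1) + 1) :=
        (hmo (k (j + 1))).2.1 (by omega)
      omega
  refine ⟨k, ν, hkmono, hk0, hν0, hνmono, hblock, ?_⟩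
  intro l
  refine ⟨fun i => if i = 0 then 0 else k (i - 1) + 1, rfl, ?_, ?_⟩
  · intro i j hij
    dsimp only
    rcases Nat.eq_zero_or_pos i with hi | hi
    · subst hi
      rw [if_pos rfl, if_neg (by omega)]
      omega
    · rw [if_neg (by omega), if_neg (by omega)]
      have := hkmono (show i - 1 < j - 1 by omega)
      omega
  · intro i _
    dsimp only
    refine varSpan_single ?_ (none_mem_of_extracted hw _)
    simp only [Set.mem_Ico]
    cases i with
    | zero =>
      rw [if_pos rfl, if_neg (Nat.succ_ne_zero 0)]
      simp [hk0]
    | succ j =>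
      rw [if_neg (Nat.succ_ne_zero j), if_neg (Nat.succ_ne_zero (j + 1))]
      simp only [Nat.add_sub_cancel]
      have := hkmono (show j < j + 1 by omega)
      omega

end HJProof

namespace HJProof
open HJ

variable {α : Type*}

theorem none_mem_of_varSpan {A : Set α} {s : ℕ → List (Option α)} {I : Set ℕ}
    {w : List (Option α)} (h : w ∈ varSpan (fun _ => A) s I) : none ∈ w := by
  obtain ⟨n, l, b, -, -, -, hnone, -⟩ := h
  exact hnone

theorem blockseq_extracted {A : Set α} {s u : ℕ → List (Option α)} {μ : ℕ → ℕ}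
    (hμ : StrictMono μ)
    (hblk : ∀ i, u i ∈ varSpan (fun _ => A) s (Set.Ico (μ i) (μ (i + 1)))) :
    Extracted (fun _ => A) s u := by
  intro l
  refine ⟨fun i => if i = 0 then 0 else μ i, rfl, ?_, ?_⟩
  · intro i j hij
    dsimp only
    by_cases hi : i = 0
    · subst hi
      rw [if_pos rfl, if_neg (by omega)]
      calc 0 ≤ μ 0 := Nat.zero_le _
        _ < μ j := hμ hij
    · rw [if_neg hi, if_neg (by omega)]
      exact hμ hij
  · intro i _
    refine varSpan_mono ?_ (hblk i)
    dsimp only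
    have h2 : (if i + 1 = 0 then 0 else μ (i + 1)) = μ (i + 1) := if_neg (by omega)
    rw [h2]
    by_cases hi : i = 0
    · subst hi
      rw [if_pos rfl]
      exact Set.Ico_subset_Ico (by omega) le_rfl
    · rw [if_neg hi]

theorem constSpan_finite (A : Finset α) (s : ℕ → List (Option α)) (j : ℕ) :
    (constSpan (fun _ => (A : Set α)) s (Set.Iio j)).Finite := by
  classical
  have hsub : constSpan (fun _ => (A : Set α)) s (Set.Iio j) ⊆
      (fun L : List (ℕ × α) => PC s L) ''
        {L | L.length ≤ j ∧ ∀ p ∈ L, p ∈ ((Finset.range j) ×ˢ A : Finset (ℕ × α))} := by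
    intro w hw
    rw [mem_constSpan_iff] at hw
    obtain ⟨L, hne, hpw, hmem, rfl⟩ := hw
    refine ⟨L, ⟨?_, ?_⟩, rfl⟩
    · have hnd : (L.map Prod.fst).Nodup := hpw.imp fun h => ne_of_lt h
      have hlen : (L.map Prod.fst).length = L.length := by simp
      have hcard : (L.map Prod.fst).toFinset.card = (L.map Prod.fst).length :=
        List.toFinset_card_of_nodup hnd
      have hsubrange : (L.map Prod.fst).toFinset ⊆ Finset.range j := by
        intro x hx
        rw [List.mem_toFinset, List.mem_map] at hx
        obtain ⟨p, hp, rfl⟩ := hx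
        simpa using (hmem p hp).1
      have := Finset.card_le_card hsubrange
      rw [Finset.card_range] at this
      omega
    · intro p hp
      rw [Finset.mem_product]
      exact ⟨by simpa using (hmem p hp).1, (hmem p hp).2⟩
  refine Set.Finite.subset (Set.Finite.image _ ?_) hsub
  have hsub2 : {L : List (ℕ × α) | L.length ≤ j ∧
        ∀ p ∈ L, p ∈ ((Finset.range j) ×ˢ A : Finset (ℕ × α))} ⊆
      (fun l : List {x // x ∈ ((Finset.range j) ×ˢ A : Finset (ℕ × α))} =>
        l.map Subtype.val) '' {l | l.length ≤ j} := by
    intro L hL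
    refine ⟨L.attach.map (fun x => ⟨x.1, hL.2 x.1 x.2⟩), by simpa using hL.1, ?_⟩
    show List.map Subtype.val (List.map _ L.attach) = L
    rw [List.map_map]
    have : (Subtype.val ∘ fun x : {x // x ∈ L} => (⟨x.1, hL.2 x.1 x.2⟩ :
        {x // x ∈ ((Finset.range j) ×ˢ A : Finset (ℕ × α))})) = fun x : {x // x ∈ L} => x.1 := rfl
    rw [this, List.attach_map_subtype_val]
  exact Set.Finite.subset (Set.Finite.image _ (List.finite_length_le _ j)) hsub2

end HJProof

namespace HJProof
open HJ

variable {α : Type*}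

theorem nat_strictMono_ge {f : ℕ → ℕ} (hf : StrictMono f) : ∀ i, i ≤ f i := by
  intro i
  induction i with
  | zero => omega
  | succ j ihj =>
    have := hf (show j < j + 1 by omega)
    omega

def MainGoal (A : Finset α) (E : Set (List α)) (s : ℕ → List (Option α)) : Prop :=
  ∃ m : ℕ, 1 ≤ m ∧
    ∃ w ∈ varSpan (fun _ => (A : Set α)) s (Set.Iio m),
      ∃ t : ℕ → List (Option α),
        Extracted (fun _ => (A : Set α)) (fun n => s (m + n)) t ∧
        IsLarge (fun _ => (A : Set α))
          (E ∩ wordQuot (A : Set α) E (substC w '' (A : Set α))) t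

structure BState (A : Finset α) (E : Set (List α)) (s : ℕ → List (Option α)) : Type _ where
  M : ℕ
  V : List (List (Option α))
  u : ℕ → List (Option α)
  μ : ℕ → ℕ
  hμ0 : μ 0 = M
  hμ : StrictMono μ
  hblk : ∀ i, u i ∈ varSpan (fun _ => (A : Set α)) s (Set.Ico (μ i) (μ (i + 1)))
  hV : ∃ b : ℕ → ℕ, Monotone b ∧ b V.length ≤ M ∧
        ∀ i < V.length, V.getD i [] ∈ varSpan (fun _ => (A : Set α)) s (Set.Ico (b i) (b (i + 1)))
  hkill : ∀ j < V.length, ∀ P : List α,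
        (P = [] ∨ P ∈ constSpan (fun _ => (A : Set α)) (fun i => V.getD i []) (Set.Iio j)) →
        ∀ a ∈ A, P ++ substC (V.getD j []) a ∉ E

theorem step_ex {A : Finset α} {E : Set (List α)} {s : ℕ → List (Option α)}
    (hE : E ⊆ WordsOver (A : Set α))
    (hlarge : IsLarge (fun _ => (A : Set α)) E s)
    (hcon : ¬ MainGoal A E s) (st : BState A E s) :
    ∃ (v : List (Option α)) (st' : BState A E s), st'.V = st.V ++ [v] := by
  classical
  obtain ⟨b, hbmono, hbM, hbmem⟩ := st.hV
  set j := st.V.length with hj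
  set vcur : ℕ → List (Option α) := fun i => st.V.getD i [] with hvcur
  set Q : Set (List α) := insert [] (constSpan (fun _ => (A : Set α)) vcur (Set.Iio j)) with hQ
  have hQfin : Q.Finite := (constSpan_finite A vcur j).insert []
  haveI : Fintype Q := hQfin.fintype
  obtain ⟨ι, hι, hHJ⟩ :=
    Combinatorics.Line.exists_mono_in_high_dimension {a // a ∈ A} (↥Q → Bool)
  haveI := hι
  set N := Fintype.card ι with hN
  set e : ι ≃ Fin N := Fintype.equivFin ι with he
  have hunone : ∀ i, none ∈ st.u i := fun i => none_mem_of_varSpan (st.hblk i)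
  have huext : Extracted (fun _ => (A : Set α)) s st.u := blockseq_extracted st.hμ st.hblk
  have hularge : IsLarge (fun _ => (A : Set α)) E st.u := isLarge_of_extracted hlarge huext
  set uT : ℕ → List (Option α) := fun k => st.u (N + k) with huT
  have huText : Extracted (fun _ => (A : Set α)) st.u uT := extracted_offset hunone N
  have huTnone : ∀ i, none ∈ uT i := fun i => hunone _
  have huTlarge : IsLarge (fun _ => (A : Set α)) E uT := isLarge_of_extracted hularge huText
  set cube : (ι → {a // a ∈ A}) → List α :=
    fun v => PC st.u (List.ofFn fun k : Fin N => ((k : ℕ), (v (e.symm k)).1)) with hcube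
  set f : List α → ((ι → {a // a ∈ A}) × Q → Bool) :=
    fun z q => decide ((q.2 : List α) ++ cube q.1 ++ z ∈ E) with hf
  obtain ⟨ix, t, htext, htlarge⟩ := partition_lemma f uT huTnone huTlarge
  set C : (ι → {a // a ∈ A}) → (Q → Bool) := fun v P => ix (v, P) with hC
  obtain ⟨lin, c₀, hmon⟩ := hHJ C
  have hNpos : 0 < N := by
    obtain ⟨i, -⟩ := lin.proper
    rw [hN]
    exact Fintype.card_pos_iff.2 ⟨i⟩
  have hMμN : st.M ≤ st.μ N := st.hμ0 ▸ st.hμ.monotone (Nat.zero_le N)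
  have hMm : st.M < st.μ N := by
    rw [← st.hμ0]
    exact st.hμ hNpos
  set wline : List (Option α) :=
    PV st.u (List.ofFn fun k : Fin N => ((k : ℕ), (lin.idxFun (e.symm k)).map Subtype.val))
    with hwline
  have hwline_mem : wline ∈ varSpan (fun _ => (A : Set α)) st.u (Set.Ico 0 N) := by
    rw [mem_varSpan_iff]
    constructor
    · obtain ⟨i0, hi0⟩ := lin.proper
      rw [hwline, PV, List.mem_flatten]
      refine ⟨st.u (e i0), ?_, hunone _⟩
      rw [List.mem_map]
      refine ⟨(((e i0 : Fin N) : ℕ), none), ?_, substV_none _⟩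
      rw [List.mem_ofFn]
      exact ⟨e i0, by simp [hi0]⟩
    · refine ⟨_, ?_, ?_, ?_, rfl⟩
      · intro hnil
        rw [List.ofFn_eq_nil_iff] at hnil
        omega
      · rw [List.map_ofFn]
        refine List.pairwise_ofFn.2 fun a b h => ?_
        simpa using h
      · intro p hp
        rw [List.mem_ofFn] at hp
        obtain ⟨k, rfl⟩ := hp
        constructor
        · simp [Set.mem_Ico]
        · intro a ha
          dsimp only at ha
          cases hcase : lin.idxFun (e.symm k) with
          | none => rw [hcase] at ha; simp at ha
          | some x =>
            rw [hcase] at ha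
            simp only [Option.map_some, Option.some_inj] at ha
            exact ha ▸ (Finset.mem_coe.mpr x.2)
  have hwline_s : wline ∈ varSpan (fun _ => (A : Set α)) s (Set.Ico st.M (st.μ N)) := by
    have h := varSpan_comp (μ := st.μ) st.hμ.monotone (fun i _ => st.hblk i) hwline_mem
    rwa [st.hμ0] at h
  have hsubstwline : ∀ x : {a // a ∈ A}, substC wline x.1 = cube (lin x) := by
    intro x
    rw [hwline, substC_PV, hcube]
    congr 1
    rw [List.map_ofFn]
    congr 1
    funext k
    cases hcase : lin.idxFun (e.symm k) <;>
      simp [Function.comp_def, Combinatorics.Line.coe_apply, hcase]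
  by_cases hPtrue : ∃ P : Q, c₀ P = true
  · -- TRUE case : the main goal holds, contradiction with hcon
    exfalso
    apply hcon
    obtain ⟨P, hP⟩ := hPtrue
    have hPmem : (P : List α) = [] ∨
        (P : List α) ∈ constSpan (fun _ => (A : Set α)) s (Set.Iio st.M) := by
      rcases Set.mem_insert_iff.1 P.2 with h | h
      · exact Or.inl h
      · right
        rw [Iio_eq_Ico] at h
        have h2 := constSpan_comp (μ := b) hbmono
          (fun i hi => hbmem i (by simpa [Set.mem_Ico] using hi)) h
        refine constSpan_mono ?_ h2
        intro x hx
        simp only [Set.mem_Ico] at hx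
        simp only [Set.mem_Iio]
        omega
    set w'' : List (Option α) := (P : List α).map some ++ wline with hw''
    have hw''mem : w'' ∈ varSpan (fun _ => (A : Set α)) s (Set.Iio (st.μ N)) := by
      rcases hPmem with h | h
      · rw [hw'', h]
        simp only [List.map_nil, List.nil_append]
        refine varSpan_mono ?_ hwline_s
        intro x hx
        simp only [Set.mem_Ico] at hx
        simp only [Set.mem_Iio]
        omega
      · have h3 := append_const_var (I₁ := Set.Iio st.M) (I₂ := Set.Ico st.M (st.μ N))
          (fun p hp q hq => lt_of_lt_of_le hp hq.1) h hwline_s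
        refine varSpan_mono ?_ h3
        intro x hx
        rcases hx with hx | hx
        · simp only [Set.mem_Iio] at hx ⊢
          omega
        · simp only [Set.mem_Ico] at hx
          simp only [Set.mem_Iio]
          omega
    have htshift : Extracted (fun _ => (A : Set α)) (fun n => s (st.μ N + n)) t := by
      refine extracted_trans ?_ htext
      refine blockseq_extracted (μ := fun k => st.μ (N + k) - st.μ N) ?_ ?_
      · intro i k hik
        dsimp only
        have h1 : st.μ N ≤ st.μ (N + i) := st.hμ.monotone (by omega)
        have h2 : st.μ (N + i) < st.μ (N + k) := st.hμ (by omega)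
        omega
      · intro k
        have h1 := st.hblk (N + k)
        have h2 := varSpan_shift (m := st.μ N)
          (st.hμ.monotone (Nat.le_add_right N k)) h1
        exact h2
    refine ⟨st.μ N, by omega, w'', hw''mem, t, htshift, ?_⟩
    refine isLarge_mono_set ?_ htlarge
    rintro z ⟨hzE, hzf⟩
    have hfz : f z = ix := hzf
    refine ⟨hzE, hE hzE, ?_⟩
    rintro w ⟨a, ha, rfl⟩
    set x : {a // a ∈ A} := ⟨a, ha⟩ with hx
    have hsub : substC w'' a = (P : List α) ++ cube (lin x) := by
      rw [hw'', substC_append, substC_map_some, hsubstwline x]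
    rw [hsub]
    have hcol : f z (lin x, P) = c₀ P := by
      rw [hfz]
      exact congrFun (hmon x) P
    rw [hP] at hcol
    have := of_decide_eq_true hcol
    exact this
  · -- FALSE case : extend the state
    push_neg at hPtrue
    have hc₀ : ∀ P : Q, c₀ P = false := by
      intro P
      have := hPtrue P
      revert this
      cases c₀ P <;> simp
    have htnone : ∀ i, none ∈ t i := none_mem_of_extracted htext
    obtain ⟨z, hzmem, hzspan⟩ := htlarge t (extracted_refl htnone)
    have hzE : z ∈ E := hzmem.1
    have hfz : f z = ix := hzmem.2
    obtain ⟨nb, hzb⟩ := constSpan_univ_bounded hzspan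
    rw [Iio_eq_Ico] at hzb
    obtain ⟨mT, hmT0, hmTmono, hmTmem⟩ := htext nb
    have hz1 : z ∈ constSpan (fun _ => (A : Set α)) uT (Set.Ico (mT 0) (mT nb)) :=
      constSpan_comp hmTmono.monotone
        (fun i hi => hmTmem i (by simp only [Set.mem_Ico] at hi; omega)) hzb
    rw [hmT0] at hz1
    set R := st.μ (N + mT nb) with hR
    have hz2 : z ∈ constSpan (fun _ => (A : Set α)) s (Set.Ico (st.μ N) R) := by
      have h := constSpan_comp (μ := fun k => st.μ (N + k))
        (fun i k hik => st.hμ.monotone (by omega)) (fun k _ => st.hblk (N + k)) hz1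
      exact h
    have hμNR : st.μ N ≤ R := st.hμ.monotone (Nat.le_add_right _ _)
    have hMR : st.M ≤ R := le_trans hMμN hμNR
    set v' : List (Option α) := wline ++ z.map some with hv'
    have hv'mem : v' ∈ varSpan (fun _ => (A : Set α)) s (Set.Ico st.M R) := by
      have h := append_var_const (I₁ := Set.Ico st.M (st.μ N)) (I₂ := Set.Ico (st.μ N) R)
        (fun p hp q hq => lt_of_lt_of_le hp.2 hq.1) hwline_s hz2
      rwa [Set.Ico_union_Ico_eq_Ico hMμN hμNR] at h
    have hkillnew : ∀ P : List α,
        (P = [] ∨ P ∈ constSpan (fun _ => (A : Set α)) vcur (Set.Iio j)) →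
        ∀ a ∈ A, P ++ substC v' a ∉ E := by
      intro P hPm a ha hmem
      have hPQ : P ∈ Q := by
        rcases hPm with h | h
        · rw [hQ, h]; exact Set.mem_insert _ _
        · rw [hQ]; exact Set.mem_insert_of_mem _ h
      set x : {a // a ∈ A} := ⟨a, ha⟩ with hx
      have hsub : substC v' a = cube (lin x) ++ z := by
        rw [hv', substC_append, substC_map_some, hsubstwline x]
      have hfzP : f z (lin x, ⟨P, hPQ⟩) = c₀ ⟨P, hPQ⟩ := by
        rw [hfz]
        exact congrFun (hmon x) _
      rw [hc₀] at hfzP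
      have hnot := of_decide_eq_false hfzP
      apply hnot
      rw [hsub] at hmem
      rw [← List.append_assoc] at hmem
      exact hmem
    -- build new state
    have hwext : Extracted (fun _ => (A : Set α)) s (fun i => t (nb + i)) :=
      extracted_trans (extracted_trans (extracted_trans huext huText) htext)
        (extracted_offset htnone nb)
    obtain ⟨k, ν, hkmono, hk0, hν0, hνmono, hblkT, hext2⟩ := exists_block_subseq hwext
    have hνge : ∀ i, i ≤ ν i := nat_strictMono_ge hνmono
    have hRν : R ≤ ν R := hνge R
    refine ⟨v', ⟨ν R, st.V ++ [v'], fun i => t (nb + k (R + i)), fun i => ν (R + i),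
      rfl, fun i i' hii' => hνmono (by omega), fun i => hblkT (R + i), ?_, ?_⟩, rfl⟩
    · -- hV
      refine ⟨fun i => if i ≤ j then b i else ν R, ?_, ?_, ?_⟩
      · intro i i' hii'
        dsimp only
        by_cases hi : i ≤ j
        · rw [if_pos hi]
          by_cases hi' : i' ≤ j
          · rw [if_pos hi']
            exact hbmono hii'
          · rw [if_neg hi']
            exact le_trans (le_trans (hbmono hi) hbM) (le_trans hMR hRν)
        · rw [if_neg hi, if_neg (show ¬ i' ≤ j by omega)]
      · dsimp only
        rw [List.length_append, List.length_singleton,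
          if_neg (show ¬ st.V.length + 1 ≤ j by omega)]
      · intro i hi
        rw [List.length_append, List.length_singleton] at hi
        by_cases hij : i < j
        · rw [List.getD_append st.V [v'] [] i (by omega)]
          dsimp only
          rw [if_pos (show i ≤ j by omega), if_pos (show i + 1 ≤ j by omega)]
          exact hbmem i hij
        · have hieq : i = j := by omega
          rw [List.getD_append_right st.V [v'] [] i (by omega)]
          have h2 : i - st.V.length = 0 := by omega
          rw [h2, List.getD_cons_zero]
          dsimp only
          rw [if_pos (show i ≤ j by omega), if_neg (show ¬ i + 1 ≤ j by omega), hieq]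
          refine varSpan_mono ?_ hv'mem
          exact Set.Ico_subset_Ico hbM hRν
    · -- hkill
      intro j' hj' P hPm a ha
      rw [List.length_append, List.length_singleton] at hj'
      have hagree : ∀ i ∈ Set.Iio j, (fun i => (st.V ++ [v']).getD i []) i = vcur i := by
        intro i hi
        simp only [Set.mem_Iio] at hi
        exact List.getD_append st.V [v'] [] i (by omega)
      by_cases hjj : j' < j
      · have h1 : (st.V ++ [v']).getD j' [] = st.V.getD j' [] :=
          List.getD_append st.V [v'] [] j' (by omega)
        rw [h1]
        refine st.hkill j' hjj P ?_ a ha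
        rcases hPm with h | h
        · exact Or.inl h
        · right
          refine constSpan_congr (fun i hi => hagree i ?_) h
          simp only [Set.mem_Iio] at hi ⊢
          omega
      · have hieq : j' = j := by omega
        have h1 : (st.V ++ [v']).getD j' [] = v' := by
          rw [List.getD_append_right st.V [v'] [] j' (by omega)]
          have h2 : j' - st.V.length = 0 := by omega
          rw [h2, List.getD_cons_zero]
        rw [h1]
        refine hkillnew P ?_ a ha
        rcases hPm with h | h
        · exact Or.inl h
        · right
          rw [hieq] at h
          exact constSpan_congr hagree h

end HJProof

namespace HJProof
open HJ

variable {α : Type*}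

noncomputable def nextBS {A : Finset α} {E : Set (List α)} {s : ℕ → List (Option α)}
    (hE : E ⊆ WordsOver (A : Set α))
    (hlarge : IsLarge (fun _ => (A : Set α)) E s)
    (hcon : ¬ MainGoal A E s) (st : BState A E s) : BState A E s :=
  (Classical.choose_spec (step_ex hE hlarge hcon st)).choose

theorem nextBS_spec {A : Finset α} {E : Set (List α)} {s : ℕ → List (Option α)}
    (hE : E ⊆ WordsOver (A : Set α))
    (hlarge : IsLarge (fun _ => (A : Set α)) E s)
    (hcon : ¬ MainGoal A E s) (st : BState A E s) :
    ∃ v, (nextBS hE hlarge hcon st).V = st.V ++ [v] :=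
  ⟨_, (Classical.choose_spec (step_ex hE hlarge hcon st)).choose_spec⟩

def initBS (A : Finset α) (E : Set (List α)) (s : ℕ → List (Option α))
    (hs : ∀ n, IsVarWord (A : Set α) (s n)) : BState A E s where
  M := 0
  V := []
  u := s
  μ := id
  hμ0 := rfl
  hμ := strictMono_id
  hblk := fun i => varSpan_single (by simp [Set.mem_Ico]) (hs i).2
  hV := ⟨fun _ => 0, monotone_const, le_rfl, fun i hi => absurd hi (by simp)⟩
  hkill := fun j hj => absurd hj (by simp)

noncomputable def chainBS {A : Finset α} {E : Set (List α)} {s : ℕ → List (Option α)}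
    (hE : E ⊆ WordsOver (A : Set α))
    (hlarge : IsLarge (fun _ => (A : Set α)) E s)
    (hcon : ¬ MainGoal A E s)
    (hs : ∀ n, IsVarWord (A : Set α) (s n)) : ℕ → BState A E s :=
  fun n => Nat.rec (initBS A E s hs) (fun _ st => nextBS hE hlarge hcon st) n

theorem chainBS_zero {A : Finset α} {E : Set (List α)} {s : ℕ → List (Option α)}
    (hE : E ⊆ WordsOver (A : Set α)) (hlarge : IsLarge (fun _ => (A : Set α)) E s)
    (hcon : ¬ MainGoal A E s) (hs : ∀ n, IsVarWord (A : Set α) (s n)) :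
    chainBS hE hlarge hcon hs 0 = initBS A E s hs := rfl

theorem chainBS_succ {A : Finset α} {E : Set (List α)} {s : ℕ → List (Option α)}
    (hE : E ⊆ WordsOver (A : Set α)) (hlarge : IsLarge (fun _ => (A : Set α)) E s)
    (hcon : ¬ MainGoal A E s) (hs : ∀ n, IsVarWord (A : Set α) (s n)) (n : ℕ) :
    chainBS hE hlarge hcon hs (n + 1) = nextBS hE hlarge hcon (chainBS hE hlarge hcon hs n) :=
  rfl

end HJProof


namespace HJProof
open HJ

theorem main_result {α : Type*} (A : Finset α) (hA : A.Nonempty)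
    (E : Set (List α)) (hE : E ⊆ WordsOver (A : Set α))
    (s : ℕ → List (Option α)) (hs : ∀ n, IsVarWord (A : Set α) (s n))
    (hlarge : IsLarge (fun _ => (A : Set α)) E s) :
    ∃ m : ℕ, 1 ≤ m ∧
      ∃ w ∈ varSpan (fun _ => (A : Set α)) s (Set.Iio m),
        ∃ t : ℕ → List (Option α),
          Extracted (fun _ => (A : Set α)) (fun n => s (m + n)) t ∧
          IsLarge (fun _ => (A : Set α))
            (E ∩ wordQuot (A : Set α) E (substC w '' (A : Set α))) t := by
  classical
  by_contra hcon
  have hcon' : ¬ MainGoal A E s := hcon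
  set ch : ℕ → BState A E s := chainBS hE hlarge hcon' hs with hchdef
  have hch : ∀ n, ∃ v, (ch (n + 1)).V = (ch n).V ++ [v] := by
    intro n
    rw [hchdef]
    exact nextBS_spec hE hlarge hcon' _
  have hlen : ∀ n, (ch n).V.length = n := by
    intro n
    induction n with
    | zero =>
      rw [hchdef]
      rfl
    | succ n ihn =>
      obtain ⟨v, hv⟩ := hch n
      rw [hv, List.length_append, List.length_singleton, ihn]
  set vseq : ℕ → List (Option α) := fun n => (ch (n + 1)).V.getD n [] with hvseq
  have hcoh : ∀ n i, i < n → (ch n).V.getD i [] = vseq i := by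
    intro n
    induction n with
    | zero => intro i hi; omega
    | succ n ihn =>
      intro i hi
      by_cases hin : i < n
      · obtain ⟨v, hv⟩ := hch n
        rw [hv, List.getD_append _ _ _ _ (by rw [hlen n]; omega)]
        exact ihn i hin
      · have hieq : i = n := by omega
        subst hieq
        rw [hvseq]
  have hvext : Extracted (fun _ => (A : Set α)) s vseq := by
    intro l
    obtain ⟨b, hbmono, hbM, hbmem⟩ := (ch (l + 1)).hV
    have hblt : ∀ i ≤ l, b i < b (i + 1) := by
      intro i hi
      exact varSpan_Ico_lt (hbmem i (by rw [hlen]; omega))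
    refine ⟨fun i => if i = 0 then 0 else if i ≤ l + 1 then b i
      else b (l + 1) + (i - (l + 1)), rfl, ?_, ?_⟩
    · apply strictMono_nat_of_lt_succ
      intro i
      by_cases hi : i = 0
      · subst hi
        rw [if_pos rfl, if_neg (show ¬ (0:ℕ) + 1 = 0 by omega),
          if_pos (show (0:ℕ) + 1 ≤ l + 1 by omega)]
        have := hblt 0 (by omega)
        omega
      · rw [if_neg hi, if_neg (show ¬ i + 1 = 0 by omega)]
        by_cases hi2 : i + 1 ≤ l + 1
        · rw [if_pos (show i ≤ l + 1 by omega), if_pos hi2]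
          exact hblt i (by omega)
        · by_cases hi3 : i ≤ l + 1
          · rw [if_pos hi3, if_neg hi2]
            have hieq : i = l + 1 := by omega
            rw [hieq]
            omega
          · rw [if_neg hi3, if_neg hi2]
            omega
    · intro i hi
      have h1 := hbmem i (by rw [hlen]; omega)
      rw [hcoh (l + 1) i (by omega)] at h1
      refine varSpan_mono (Set.Ico_subset_Ico ?_ ?_) h1
      · dsimp only
        by_cases hi0 : i = 0
        · rw [if_pos hi0]
          omega
        · rw [if_neg hi0, if_pos (show i ≤ l + 1 by omega)]
      · dsimp only
        rw [if_neg (show ¬ i + 1 = 0 by omega), if_pos (show i + 1 ≤ l + 1 by omega)]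
  obtain ⟨z, hzE, hzspan⟩ := hlarge vseq hvext
  obtain ⟨n, l, a, hmono, -, ha, hzeq⟩ := hzspan
  set jm := l (Fin.last n) with hjm
  set P := (List.ofFn fun i : Fin n =>
    substC (vseq (l i.castSucc)) (a i.castSucc)).flatten with hPdef
  have hzdec : z = P ++ substC (vseq jm) (a (Fin.last n)) := by
    rw [hPdef, hzeq, List.ofFn_succ', List.concat_eq_append, List.flatten_append]
    simp
    rfl
  have hPmem : P = [] ∨ P ∈ constSpan (fun _ => (A : Set α)) vseq (Set.Iio jm) := by
    cases n with
    | zero =>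
      left
      rw [hPdef]
      simp
    | succ n' =>
      right
      refine ⟨n', fun i => l i.castSucc, fun i => a i.castSucc, ?_, ?_, fun i => ha _, rfl⟩
      · intro i j hij
        exact hmono (by simpa [Fin.castSucc_lt_castSucc_iff] using hij)
      · intro i
        simp only [Set.mem_Iio, hjm]
        exact hmono (Fin.castSucc_lt_last i)
  have hPmem' : P = [] ∨ P ∈ constSpan (fun _ => (A : Set α))
      (fun i => (ch (jm + 1)).V.getD i []) (Set.Iio jm) := by
    rcases hPmem with h | h
    · exact Or.inl h
    · right
      refine constSpan_congr ?_ h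
      intro i hi
      simp only [Set.mem_Iio] at hi
      exact (hcoh (jm + 1) i (by omega)).symm
  have halast : a (Fin.last n) ∈ A := Finset.mem_coe.1 (ha (Fin.last n))
  have hk := (ch (jm + 1)).hkill jm (by rw [hlen]; omega) P hPmem' (a (Fin.last n)) halast
  apply hk
  have hgetd : (ch (jm + 1)).V.getD jm [] = vseq jm := by rw [hvseq]
  rw [hgetd, ← hzdec]
  exact hzE

end HJProof

open HJ in
/-- Lemma 2.10. -/
theorem stmt7 {α : Type*} (A : Finset α) (hA : A.Nonempty)
    (E : Set (List α)) (hE : E ⊆ WordsOver (A : Set α))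
    (s : ℕ → List (Option α)) (hs : ∀ n, IsVarWord (A : Set α) (s n))
    (hlarge : IsLarge (fun _ => (A : Set α)) E s) :
    ∃ m : ℕ, 1 ≤ m ∧
      ∃ w ∈ varSpan (fun _ => (A : Set α)) s (Set.Iio m),
        ∃ t : ℕ → List (Option α),
          Extracted (fun _ => (A : Set α)) (fun n => s (m + n)) t ∧
          IsLarge (fun _ => (A : Set α))
            (E ∩ wordQuot (A : Set α) E (substC w '' (A : Set α))) t := by
  exact HJProof.main_result A hA E hE s hs hlarge
end
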